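/- arXiv:2002.01613 — 8 statements merged into one kernel-verified Lean document; each statement's English description precedes it below -/
import Mathlib

section
/- Let X be a separable Banach space over 𝕜 (𝕜 = ℝ or ℂ), let T and S be bounded linear operators on X with T = λ•I + S for some scalar λ ∈ 𝕜, and suppose T is hypercyclic. Then the following are equivalent: (i) T satisfies the Hypercyclicity Criterion; (ii) T satisfies the Cyclicity Criterion; (iii) S satisfies the Cyclicity Criterion; (iv) S ⊕ S is cyclic; (v) T ⊕ T is cyclic; (vi) T ⊕ T is hypercyclic. -/
open Filter Topology Polynomial

variable {𝕜 X : Type*} [RCLike 𝕜] [NormedAddCommGroup X] [NormedSpace 𝕜 X]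

/-- `T` is hypercyclic: some vector has dense orbit. -/
def Hypercyclic (T : X →L[𝕜] X) : Prop :=
  ∃ x : X, Dense (Set.range fun n : ℕ => (T ^ n) x)

/-- `T` is cyclic: the span of some orbit is dense. -/
def Cyclic (T : X →L[𝕜] X) : Prop :=
  ∃ x : X, Dense (Submodule.span 𝕜 (Set.range fun n : ℕ => (T ^ n) x) : Set X)

/-- The Hypercyclicity Criterion. -/
def HypercyclicityCriterion (T : X →L[𝕜] X) : Prop :=
  ∃ (X₀ Y₀ : Set X) (n : ℕ → ℕ) (S : ℕ → X → X),
    Dense X₀ ∧ Dense Y₀ ∧ StrictMono n ∧ (∀ k, 0 < n k) ∧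
    (∀ x ∈ X₀, Tendsto (fun k => (T ^ n k) x) atTop (𝓝 0)) ∧
    (∀ y ∈ Y₀, Tendsto (fun k => S k y) atTop (𝓝 0)) ∧
    (∀ y ∈ Y₀, Tendsto (fun k => (T ^ n k) (S k y)) atTop (𝓝 y))

/-- The Cyclicity Criterion. -/
def CyclicityCriterion (T : X →L[𝕜] X) : Prop :=
  ∃ (V W : Set X) (p : ℕ → Polynomial 𝕜) (S : ℕ → X → X),
    Dense V ∧ Dense W ∧
    (∀ x ∈ V, Tendsto (fun k => aeval T (p k) x) atTop (𝓝 0)) ∧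
    (∀ x ∈ W, Tendsto (fun k => S k x) atTop (𝓝 0)) ∧
    (∀ x ∈ W, Tendsto (fun k => aeval T (p k) (S k x)) atTop (𝓝 x))

/-! ### Auxiliary lemmas -/

section Aux

lemma aux_mul_comm (A : X →L[𝕜] X) (p q : Polynomial 𝕜) :
    aeval A p * aeval A q = aeval A q * aeval A p := by
  rw [← map_mul, ← map_mul, mul_comm]

lemma aux_aeval_pow_comm (A : X →L[𝕜] X) (p : Polynomial 𝕜) (n : ℕ) (z : X) :
    aeval A p ((A ^ n) z) = (A ^ n) (aeval A p z) := by
  have hX : (Polynomial.aeval A) ((Polynomial.X : Polynomial 𝕜) ^ n) = A ^ n := by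
    rw [map_pow, aeval_X]
  have h : aeval A p * A ^ n = A ^ n * aeval A p := by
    rw [← hX]
    exact aux_mul_comm A p (Polynomial.X ^ n)
  calc aeval A p ((A ^ n) z) = (aeval A p * A ^ n) z := rfl
    _ = (A ^ n * aeval A p) z := by rw [h]
    _ = (A ^ n) (aeval A p z) := rfl

lemma aux_pow_pow_comm (A : X →L[𝕜] X) (m n : ℕ) (z : X) :
    (A ^ n) ((A ^ m) z) = (A ^ m) ((A ^ n) z) := by
  have h : A ^ n * A ^ m = A ^ m * A ^ n := by
    rw [← pow_add, ← pow_add, add_comm]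
  calc (A ^ n) ((A ^ m) z) = (A ^ n * A ^ m) z := rfl
    _ = (A ^ m * A ^ n) z := by rw [h]
    _ = (A ^ m) ((A ^ n) z) := rfl

lemma aux_prodMap_pow (A : X →L[𝕜] X) (n : ℕ) (z : X × X) :
    ((A.prodMap A) ^ n) z = ((A ^ n) z.1, (A ^ n) z.2) := by
  induction n with
  | zero => simp
  | succ n ih =>
      calc ((A.prodMap A) ^ (n + 1)) z = (A.prodMap A) (((A.prodMap A) ^ n) z) := by
            rw [pow_succ', ContinuousLinearMap.mul_apply]
        _ = (A ((A ^ n) z.1), A ((A ^ n) z.2)) := by rw [ih]; rfl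
        _ = ((A ^ (n + 1)) z.1, (A ^ (n + 1)) z.2) := by
            rw [pow_succ']; rfl

lemma aux_aeval_prodMap (A : X →L[𝕜] X) (p : Polynomial 𝕜) (a b : X) :
    aeval (A.prodMap A) p (a, b) = (aeval A p a, aeval A p b) := by
  induction p using Polynomial.induction_on' with
  | add p q hp hq =>
      simp only [map_add, ContinuousLinearMap.add_apply, hp, hq, Prod.mk_add_mk]
  | monomial n c =>
      simp only [aeval_monomial, Algebra.algebraMap_eq_smul_one, smul_mul_assoc, one_mul,
        ContinuousLinearMap.smul_apply]
      rw [aux_prodMap_pow]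
      rfl

lemma aux_span_orbit (A : X →L[𝕜] X) (v : X) :
    (Submodule.span 𝕜 (Set.range fun n : ℕ => (A ^ n) v) : Set X)
      = Set.range fun p : Polynomial 𝕜 => aeval A p v := by
  apply Set.Subset.antisymm
  · have hle : Submodule.span 𝕜 (Set.range fun n : ℕ => (A ^ n) v) ≤
        LinearMap.range
          ({ toFun := fun p : Polynomial 𝕜 => aeval A p v
             map_add' := fun p q => by simp
             map_smul' := fun c p => by simp } :
            Polynomial 𝕜 →ₗ[𝕜] X) := by
      rw [Submodule.span_le]
      rintro _ ⟨n, rfl⟩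
      exact ⟨Polynomial.X ^ n, by simp [aeval_X_pow]⟩
    intro z hz
    rcases hle hz with ⟨p, hp⟩
    exact ⟨p, hp⟩
  · rintro _ ⟨p, rfl⟩
    have : ∀ q : Polynomial 𝕜,
        aeval A q v ∈ Submodule.span 𝕜 (Set.range fun n : ℕ => (A ^ n) v) := by
      intro q
      induction q using Polynomial.induction_on' with
      | add q r hq hr =>
          rw [map_add, ContinuousLinearMap.add_apply]
          exact Submodule.add_mem _ hq hr
      | monomial n c =>
          have : aeval A (monomial n c) v = c • ((A ^ n) v) := by
            rw [aeval_monomial, Algebra.algebraMap_eq_smul_one, smul_mul_assoc, one_mul,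
              ContinuousLinearMap.smul_apply]
          rw [this]
          exact Submodule.smul_mem _ _ (Submodule.subset_span ⟨n, rfl⟩)
    exact this p

lemma aux_aeval_translate (A : X →L[𝕜] X) (t : 𝕜) (q : Polynomial 𝕜) :
    aeval A (q.comp (Polynomial.X + Polynomial.C t)) = aeval (A + t • (1 : X →L[𝕜] X)) q := by
  rw [aeval_comp, map_add, aeval_X, aeval_C, Algebra.algebraMap_eq_smul_one]

lemma aux_polyRange_shift (A B : X →L[𝕜] X) (c : 𝕜)
    (hBA : B = c • ContinuousLinearMap.id 𝕜 X + A) (v : X) :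
    (Set.range fun p : Polynomial 𝕜 => aeval B p v)
      = Set.range fun p : Polynomial 𝕜 => aeval A p v := by
  have h1 : A + c • (1 : X →L[𝕜] X) = B := by
    rw [hBA, ContinuousLinearMap.one_def]; abel
  have h2 : B + (-c) • (1 : X →L[𝕜] X) = A := by
    rw [hBA, ContinuousLinearMap.one_def, neg_smul]; abel
  ext w
  constructor
  · rintro ⟨p, rfl⟩
    refine ⟨p.comp (Polynomial.X + Polynomial.C c), ?_⟩
    show aeval A (p.comp (Polynomial.X + Polynomial.C c)) v = aeval B p v
    rw [aux_aeval_translate, h1]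
  · rintro ⟨p, rfl⟩
    refine ⟨p.comp (Polynomial.X + Polynomial.C (-c)), ?_⟩
    show aeval B (p.comp (Polynomial.X + Polynomial.C (-c))) v = aeval A p v
    rw [aux_aeval_translate, h2]

lemma aux_cyclic_shift (A B : X →L[𝕜] X) (c : 𝕜)
    (hBA : B = c • ContinuousLinearMap.id 𝕜 X + A) :
    Cyclic A → Cyclic B := by
  rintro ⟨v, hv⟩
  refine ⟨v, ?_⟩
  rw [aux_span_orbit] at hv ⊢
  rwa [aux_polyRange_shift A B c hBA]

lemma aux_prodMap_shift (B A : X →L[𝕜] X) (c : 𝕜)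
    (h : B = c • ContinuousLinearMap.id 𝕜 X + A) :
    B.prodMap B = c • ContinuousLinearMap.id 𝕜 (X × X) + A.prodMap A := by
  apply ContinuousLinearMap.ext
  intro z
  have h1 : B z.1 = c • z.1 + A z.1 := by rw [h]; rfl
  have h2 : B z.2 = c • z.2 + A z.2 := by rw [h]; rfl
  show (B z.1, B z.2) = c • z + (A z.1, A z.2)
  rw [h1, h2]
  rfl

lemma aux_hyp_to_cyc (A : X →L[𝕜] X) : Hypercyclic A → Cyclic A := by
  rintro ⟨x, hx⟩
  exact ⟨x, hx.mono Submodule.subset_span⟩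

lemma aux_hcc_to_cc (A : X →L[𝕜] X) (h : HypercyclicityCriterion A) : CyclicityCriterion A := by
  obtain ⟨X₀, Y₀, n, Sm, hX₀, hY₀, _, _, h1, h2, h3⟩ := h
  refine ⟨X₀, Y₀, fun k => Polynomial.X ^ (n k), Sm, hX₀, hY₀, ?_, h2, ?_⟩
  · intro x hx; simpa [aeval_X_pow] using h1 x hx
  · intro y hy; simpa [aeval_X_pow] using h3 y hy

lemma aux_cc_shift (A B : X →L[𝕜] X) (c : 𝕜)
    (hBA : B = c • ContinuousLinearMap.id 𝕜 X + A)
    (h : CyclicityCriterion A) : CyclicityCriterion B := by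
  obtain ⟨V, W, p, Sm, hV, hW, h1, h2, h3⟩ := h
  have h2' : B + (-c) • (1 : X →L[𝕜] X) = A := by
    rw [hBA, ContinuousLinearMap.one_def, neg_smul]; abel
  have key : ∀ q : Polynomial 𝕜,
      aeval B (q.comp (Polynomial.X + Polynomial.C (-c))) = aeval A q := by
    intro q
    rw [aux_aeval_translate, h2']
  refine ⟨V, W, fun k => (p k).comp (Polynomial.X + Polynomial.C (-c)), Sm, hV, hW, ?_, h2, ?_⟩
  · intro x hx; simpa only [key] using h1 x hx
  · intro x hx; simpa only [key] using h3 x hx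

lemma aux_dense_fst {Y Z : Type*} [TopologicalSpace Y] [TopologicalSpace Z] [Nonempty Z]
    {D : Set (Y × Z)} (hD : Dense D) : Dense (Prod.fst '' D) := by
  rw [dense_iff_inter_open]
  intro U hU hne
  obtain ⟨u, hu⟩ := hne
  obtain ⟨w, hw1, hw2⟩ := hD.inter_open_nonempty (U ×ˢ (Set.univ : Set Z))
    (hU.prod isOpen_univ) ⟨(u, Classical.arbitrary Z), by simp [hu]⟩
  exact ⟨w.1, hw1.1, ⟨w, hw2, rfl⟩⟩

lemma aux_tail_dense {E : Type*} [NormedAddCommGroup E] [NormedSpace 𝕜 E] [Nontrivial E]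
    (F : E →L[𝕜] E) (v : E) (h : Dense (Set.range fun n : ℕ => (F ^ n) v)) (N : ℕ) :
    Dense {w : E | ∃ n : ℕ, N ≤ n ∧ (F ^ n) v = w} := by
  haveI : NeBot (𝓝[≠] (0 : 𝕜)) := NormedField.nhdsNE_neBot 0
  haveI : ∀ x : E, NeBot (𝓝[≠] x) := fun x => Module.punctured_nhds_neBot 𝕜 E x
  have hfin : ((fun n : ℕ => (F ^ n) v) '' {n | n < N}).Finite :=
    (Set.finite_lt_nat N).image _
  have hsub : (Set.range fun n : ℕ => (F ^ n) v) \ ((fun n : ℕ => (F ^ n) v) '' {n | n < N})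
      ⊆ {w : E | ∃ n : ℕ, N ≤ n ∧ (F ^ n) v = w} := by
    rintro w ⟨⟨n, rfl⟩, hw⟩
    exact ⟨n, le_of_not_gt fun hn => hw ⟨n, hn, rfl⟩, rfl⟩
  exact Dense.mono hsub (h.diff_finite hfin)

lemma aux_const_div_tendsto (C : ℝ) :
    Tendsto (fun k : ℕ => C * (1 / ((k : ℝ) + 1))) atTop (𝓝 0) := by
  simpa using tendsto_one_div_add_atTop_nhds_zero_nat.const_mul C

lemma aux_birkhoff {E : Type*} [NormedAddCommGroup E] [NormedSpace 𝕜 E] [CompleteSpace E]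
    [SecondCountableTopology E]
    (P : E →L[𝕜] E)
    (htrans : ∀ O O' : Set E, IsOpen O → IsOpen O' → O.Nonempty → O'.Nonempty →
      ∃ (n : ℕ) (w : E), w ∈ O ∧ (P ^ n) w ∈ O') :
    ∃ z : E, Dense (Set.range fun n : ℕ => (P ^ n) z) := by
  obtain ⟨b, hbc, hbne, hb⟩ := TopologicalSpace.exists_countable_basis E
  have hbNe : b.Nonempty := by
    by_contra hcon
    have h1 := hb.sUnion_eq
    rw [Set.not_nonempty_iff_eq_empty.1 hcon, Set.sUnion_empty] at h1
    exact absurd (h1 ▸ Set.mem_univ (0 : E)) (by simp)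
  obtain ⟨f, hf⟩ := hbc.exists_eq_range hbNe
  have hfb : ∀ j : ℕ, f j ∈ b := fun j => by rw [hf]; exact ⟨j, rfl⟩
  have hfo : ∀ j : ℕ, IsOpen (f j) := fun j => hb.isOpen (hfb j)
  have hfne : ∀ j : ℕ, (f j).Nonempty := fun j =>
    Set.nonempty_iff_ne_empty.2 fun hc => hbne (hc ▸ hfb j)
  have hOpen : ∀ j : ℕ, IsOpen (⋃ n : ℕ, (P ^ n) ⁻¹' (f j)) := fun j =>
    isOpen_iUnion fun n => (hfo j).preimage (P ^ n).continuous
  have hD : ∀ j : ℕ, Dense (⋃ n : ℕ, (P ^ n) ⁻¹' (f j)) := by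
    intro j
    rw [dense_iff_inter_open]
    intro U hU hUne
    obtain ⟨n, w, hw1, hw2⟩ := htrans U (f j) hU (hfo j) hUne (hfne j)
    exact ⟨w, hw1, Set.mem_iUnion.2 ⟨n, hw2⟩⟩
  obtain ⟨z, hz⟩ := (dense_iInter_of_isOpen hOpen hD).nonempty
  refine ⟨z, ?_⟩
  rw [hb.dense_iff]
  intro U hUb _
  obtain ⟨j, rfl⟩ : ∃ j, f j = U := by rw [hf] at hUb; exact hUb
  obtain ⟨n, hn⟩ := Set.mem_iUnion.1 (Set.mem_iInter.1 hz j)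
  exact ⟨(P ^ n) z, hn, ⟨n, rfl⟩⟩


lemma aux_norm_inv_natCast (k : ℕ) : ‖(((k + 1 : ℕ) : 𝕜))⁻¹‖ = 1 / ((k : ℝ) + 1) := by
  rw [norm_inv, RCLike.norm_natCast, one_div]
  push_cast
  ring

lemma aux_natCast_ne_zero (k : ℕ) : ((k + 1 : ℕ) : 𝕜) ≠ 0 :=
  Nat.cast_ne_zero.2 (Nat.succ_ne_zero k)

lemma aux_cyclicProd_to_cc [Nontrivial X] (A : X →L[𝕜] X) (h : Cyclic (A.prodMap A)) :
    CyclicityCriterion A := by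
  classical
  obtain ⟨z, hz⟩ := h
  rw [aux_span_orbit] at hz
  have heq : (fun p : Polynomial 𝕜 => aeval (A.prodMap A) p z)
      = fun p : Polynomial 𝕜 => (aeval A p z.1, aeval A p z.2) :=
    funext fun p => aux_aeval_prodMap A p z.1 z.2
  rw [heq] at hz
  have hV : Dense (Set.range fun q : Polynomial 𝕜 => aeval A q z.1) := by
    have hsub : Prod.fst '' (Set.range fun p : Polynomial 𝕜 => (aeval A p z.1, aeval A p z.2))
        ⊆ Set.range fun q : Polynomial 𝕜 => aeval A q z.1 := by
      rintro w ⟨-, ⟨p, rfl⟩, rfl⟩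
      exact ⟨p, rfl⟩
    exact Dense.mono hsub (aux_dense_fst hz)
  have hpk : ∀ k : ℕ, ∃ p : Polynomial 𝕜,
      ‖aeval A p z.1‖ < 1 / ((k : ℝ) + 1) ∧
      ‖aeval A p z.2 - ((k + 1 : ℕ) : 𝕜) • z.1‖ < 1 / ((k : ℝ) + 1) := by
    intro k
    have hmem : ((0 : X), ((k + 1 : ℕ) : 𝕜) • z.1)
        ∈ closure (Set.range fun p : Polynomial 𝕜 => (aeval A p z.1, aeval A p z.2)) := by
      rw [hz.closure_eq]; trivial
    obtain ⟨y, ⟨p, rfl⟩, hy⟩ :=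
      Metric.mem_closure_iff.1 hmem (1 / ((k : ℝ) + 1)) (by positivity)
    rw [Prod.dist_eq, max_lt_iff] at hy
    refine ⟨p, ?_, ?_⟩
    · simpa [dist_eq_norm] using hy.1
    · have := hy.2
      rw [dist_eq_norm, norm_sub_rev] at this
      exact this
  choose pk hpk1 hpk2 using hpk
  let σ : X → Polynomial 𝕜 := fun w =>
    if h : ∃ q : Polynomial 𝕜, aeval A q z.1 = w then h.choose else 0
  have hσ : ∀ w ∈ Set.range (fun q : Polynomial 𝕜 => aeval A q z.1),
      aeval A (σ w) z.1 = w := by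
    rintro w hw
    have hw' : ∃ q : Polynomial 𝕜, aeval A q z.1 = w := hw
    simp only [σ, dif_pos hw']
    exact hw'.choose_spec
  refine ⟨_, _, pk, fun k w => (((k + 1 : ℕ) : 𝕜))⁻¹ • aeval A (σ w) z.2, hV, hV, ?_, ?_, ?_⟩
  · rintro v ⟨q, rfl⟩
    show Tendsto (fun k => aeval A (pk k) (aeval A q z.1)) atTop (𝓝 0)
    have hcomm : ∀ k, aeval A (pk k) (aeval A q z.1) = aeval A q (aeval A (pk k) z.1) := by
      intro k
      calc aeval A (pk k) (aeval A q z.1) = (aeval A (pk k) * aeval A q) z.1 := rfl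
        _ = (aeval A q * aeval A (pk k)) z.1 := by rw [aux_mul_comm]
        _ = aeval A q (aeval A (pk k) z.1) := rfl
    apply squeeze_zero_norm (a := fun k : ℕ => ‖aeval A q‖ * (1 / ((k : ℝ) + 1)))
      ?_ (aux_const_div_tendsto _)
    intro k
    rw [hcomm k]
    calc ‖aeval A q (aeval A (pk k) z.1)‖ ≤ ‖aeval A q‖ * ‖aeval A (pk k) z.1‖ :=
          (aeval A q).le_opNorm _
      _ ≤ ‖aeval A q‖ * (1 / ((k : ℝ) + 1)) :=
          mul_le_mul_of_nonneg_left (hpk1 k).le (norm_nonneg _)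
  · intro w _
    show Tendsto (fun k => (((k + 1 : ℕ) : 𝕜))⁻¹ • aeval A (σ w) z.2) atTop (𝓝 0)
    apply squeeze_zero_norm (a := fun k : ℕ => ‖aeval A (σ w) z.2‖ * (1 / ((k : ℝ) + 1)))
      ?_ (aux_const_div_tendsto _)
    intro k
    rw [norm_smul, aux_norm_inv_natCast, mul_comm]
  · intro w hw
    show Tendsto (fun k => aeval A (pk k) ((((k + 1 : ℕ) : 𝕜))⁻¹ • aeval A (σ w) z.2))
      atTop (𝓝 w)
    rw [tendsto_iff_norm_sub_tendsto_zero]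
    have hkey : ∀ k : ℕ,
        aeval A (pk k) ((((k + 1 : ℕ) : 𝕜))⁻¹ • aeval A (σ w) z.2) - w
          = (((k + 1 : ℕ) : 𝕜))⁻¹ •
              aeval A (σ w) (aeval A (pk k) z.2 - ((k + 1 : ℕ) : 𝕜) • z.1) := by
      intro k
      have hcomm : aeval A (pk k) (aeval A (σ w) z.2) = aeval A (σ w) (aeval A (pk k) z.2) := by
        calc aeval A (pk k) (aeval A (σ w) z.2) = (aeval A (pk k) * aeval A (σ w)) z.2 := rfl
          _ = (aeval A (σ w) * aeval A (pk k)) z.2 := by rw [aux_mul_comm]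
          _ = aeval A (σ w) (aeval A (pk k) z.2) := rfl
      rw [ContinuousLinearMap.map_smul, hcomm, map_sub, ContinuousLinearMap.map_smul,
        hσ w hw, smul_sub, inv_smul_smul₀ (aux_natCast_ne_zero k)]
    apply squeeze_zero (fun k => norm_nonneg _) ?_
      (aux_const_div_tendsto ‖aeval A (σ w)‖)
    intro k
    rw [hkey k, norm_smul, aux_norm_inv_natCast, mul_comm]
    have he : ‖aeval A (pk k) z.2 - ((k + 1 : ℕ) : 𝕜) • z.1‖ ≤ 1 := by
      refine (hpk2 k).le.trans ?_
      rw [div_le_one (by positivity)]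
      have : (0 : ℝ) ≤ (k : ℝ) := Nat.cast_nonneg k
      linarith
    have hb : ‖aeval A (σ w) (aeval A (pk k) z.2 - ((k + 1 : ℕ) : 𝕜) • z.1)‖
        ≤ ‖aeval A (σ w)‖ := by
      calc ‖aeval A (σ w) (aeval A (pk k) z.2 - ((k + 1 : ℕ) : 𝕜) • z.1)‖
          ≤ ‖aeval A (σ w)‖ * ‖aeval A (pk k) z.2 - ((k + 1 : ℕ) : 𝕜) • z.1‖ :=
            (aeval A (σ w)).le_opNorm _
        _ ≤ ‖aeval A (σ w)‖ * 1 := mul_le_mul_of_nonneg_left he (norm_nonneg _)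
        _ = ‖aeval A (σ w)‖ := mul_one _
    exact mul_le_mul_of_nonneg_right hb (by positivity)

lemma aux_cc_to_hypProd [Nontrivial X] [CompleteSpace X] [TopologicalSpace.SeparableSpace X]
    (A : X →L[𝕜] X) (hA : Hypercyclic A) (h : CyclicityCriterion A) :
    Hypercyclic (A.prodMap A) := by
  haveI : SecondCountableTopology X := UniformSpace.secondCountable_of_separable X
  obtain ⟨x, hx⟩ := hA
  obtain ⟨V, W, p, Sm, hV, hW, h1, h2, h3⟩ := h
  have htrans : ∀ O O' : Set (X × X), IsOpen O → IsOpen O' → O.Nonempty → O'.Nonempty →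
      ∃ (n : ℕ) (w : X × X), w ∈ O ∧ ((A.prodMap A) ^ n) w ∈ O' := by
    intro O O' hO hO' hOne hO'ne
    obtain ⟨o, ho⟩ := hOne
    obtain ⟨o', ho'⟩ := hO'ne
    obtain ⟨U1, U2, hU1, hU2, ho1, ho2, hUsub⟩ :=
      isOpen_prod_iff.1 hO o.1 o.2 (by simpa using ho)
    obtain ⟨V1, V2, hV1, hV2, ho1', ho2', hVsub⟩ :=
      isOpen_prod_iff.1 hO' o'.1 o'.2 (by simpa using ho')
    obtain ⟨v1, hv1V, hv1U⟩ := hV.exists_mem_open hU1 ⟨_, ho1⟩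
    obtain ⟨w1, hw1W, hw1U⟩ := hW.exists_mem_open hU2 ⟨_, ho2⟩
    obtain ⟨v2, hv2V, hv2U⟩ := hV.exists_mem_open hV1 ⟨_, ho1'⟩
    obtain ⟨w2, hw2W, hw2U⟩ := hW.exists_mem_open hV2 ⟨_, ho2'⟩
    have t1 : Tendsto (fun k => v1 + Sm k w1) atTop (𝓝 v1) := by
      simpa using tendsto_const_nhds.add (h2 w1 hw1W)
    have t2 : Tendsto (fun k => aeval A (p k) (v1 + Sm k w1)) atTop (𝓝 w1) := by
      have := (h1 v1 hv1V).add (h3 w1 hw1W)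
      rw [zero_add] at this
      exact this.congr fun k => (map_add _ _ _).symm
    have t3 : Tendsto (fun k => v2 + Sm k w2) atTop (𝓝 v2) := by
      simpa using tendsto_const_nhds.add (h2 w2 hw2W)
    have t4 : Tendsto (fun k => aeval A (p k) (v2 + Sm k w2)) atTop (𝓝 w2) := by
      have := (h1 v2 hv2V).add (h3 w2 hw2W)
      rw [zero_add] at this
      exact this.congr fun k => (map_add _ _ _).symm
    have ev : ∀ᶠ k in atTop, (v1 + Sm k w1 ∈ U1) ∧ (aeval A (p k) (v1 + Sm k w1) ∈ U2)
        ∧ (v2 + Sm k w2 ∈ V1) ∧ (aeval A (p k) (v2 + Sm k w2) ∈ V2) :=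
      (t1.eventually_mem (hU1.mem_nhds hv1U)).and
        ((t2.eventually_mem (hU2.mem_nhds hw1U)).and
        ((t3.eventually_mem (hV1.mem_nhds hv2U)).and
          (t4.eventually_mem (hV2.mem_nhds hw2U))))
    obtain ⟨k, hk1, hk2, hk3, hk4⟩ := ev.exists
    have hU' : IsOpen (U1 ∩ (aeval A (p k)) ⁻¹' U2) :=
      hU1.inter (hU2.preimage (aeval A (p k)).continuous)
    have hV' : IsOpen (V1 ∩ (aeval A (p k)) ⁻¹' V2) :=
      hV1.inter (hV2.preimage (aeval A (p k)).continuous)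
    obtain ⟨y, hyR, hyU⟩ := hx.exists_mem_open hU' ⟨_, hk1, hk2⟩
    obtain ⟨m, rfl⟩ := hyR
    have hh : Dense (Set.range fun n : ℕ => (A ^ n) ((A ^ m) x)) := by
      have hsub : {w : X | ∃ n : ℕ, m ≤ n ∧ (A ^ n) x = w}
          ⊆ Set.range fun n : ℕ => (A ^ n) ((A ^ m) x) := by
        rintro w ⟨n, hn, rfl⟩
        refine ⟨n - m, ?_⟩
        calc (A ^ (n - m)) ((A ^ m) x) = ((A ^ (n - m)) * (A ^ m)) x := rfl
          _ = (A ^ (n - m + m)) x := by rw [pow_add]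
          _ = (A ^ n) x := by rw [Nat.sub_add_cancel hn]
      exact Dense.mono hsub (aux_tail_dense A x hx m)
    obtain ⟨y', hy'R, hy'V⟩ := hh.exists_mem_open hV' ⟨_, hk3, hk4⟩
    obtain ⟨n, rfl⟩ := hy'R
    refine ⟨n, ((A ^ m) x, aeval A (p k) ((A ^ m) x)), hUsub ⟨hyU.1, hyU.2⟩, ?_⟩
    rw [aux_prodMap_pow]
    apply hVsub
    refine ⟨hy'V.1, ?_⟩
    show (A ^ n) (aeval A (p k) ((A ^ m) x)) ∈ V2
    rw [← aux_aeval_pow_comm]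
    exact hy'V.2
  exact aux_birkhoff (A.prodMap A) htrans

lemma aux_hypProd_to_hcc [Nontrivial X] (A : X →L[𝕜] X)
    (h : Hypercyclic (A.prodMap A)) : HypercyclicityCriterion A := by
  classical
  obtain ⟨z, hz⟩ := h
  have hx : Dense (Set.range fun m : ℕ => (A ^ m) z.1) := by
    have hsub : Prod.fst '' (Set.range fun n : ℕ => ((A.prodMap A) ^ n) z)
        ⊆ Set.range fun m : ℕ => (A ^ m) z.1 := by
      rintro w ⟨-, ⟨n, rfl⟩, rfl⟩
      exact ⟨n, by show (A ^ n) z.1 = (((A.prodMap A) ^ n) z).1; rw [aux_prodMap_pow]⟩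
    exact Dense.mono hsub (aux_dense_fst hz)
  haveI : Nontrivial (X × X) := nontrivial_prod_left
  have hstep : ∀ k N : ℕ, ∃ n : ℕ, N < n ∧
      ‖(A ^ n) z.1‖ < 1 / ((k : ℝ) + 1) ∧
      ‖(A ^ n) z.2 - ((k + 1 : ℕ) : 𝕜) • z.1‖ < 1 / ((k : ℝ) + 1) := by
    intro k N
    have hd := aux_tail_dense (A.prodMap A) z hz (N + 1)
    obtain ⟨w, hwb, hwm⟩ := Metric.dense_iff.1 hd
      (((0 : X), ((k + 1 : ℕ) : 𝕜) • z.1)) (1 / ((k : ℝ) + 1)) (by positivity)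
    obtain ⟨n, hnN, rfl⟩ := hwm
    rw [Metric.mem_ball, aux_prodMap_pow, Prod.dist_eq, max_lt_iff] at hwb
    refine ⟨n, hnN, ?_, ?_⟩
    · simpa [dist_eq_norm] using hwb.1
    · have := hwb.2
      rw [dist_eq_norm] at this
      exact this
  choose F hF1 hF2 hF3 using hstep
  let nk : ℕ → ℕ := fun k => Nat.rec (F 0 0) (fun k ih => F (k + 1) ih) k
  have hnkS : ∀ k : ℕ, nk (k + 1) = F (k + 1) (nk k) := fun k => rfl
  have hmono : StrictMono nk := strictMono_nat_of_lt_succ fun k => by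
    rw [hnkS k]; exact hF1 (k + 1) (nk k)
  have hpos : ∀ k, 0 < nk k := by
    intro k
    cases k with
    | zero => exact hF1 0 0
    | succ k => exact Nat.lt_of_le_of_lt (Nat.zero_le _) (hmono (Nat.lt_succ_self k))
  have hnk2 : ∀ k, ‖(A ^ nk k) z.1‖ < 1 / ((k : ℝ) + 1) := by
    intro k
    cases k with
    | zero => exact hF2 0 0
    | succ k => rw [hnkS k]; exact hF2 (k + 1) (nk k)
  have hnk3 : ∀ k, ‖(A ^ nk k) z.2 - ((k + 1 : ℕ) : 𝕜) • z.1‖ < 1 / ((k : ℝ) + 1) := by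
    intro k
    cases k with
    | zero => exact hF3 0 0
    | succ k => rw [hnkS k]; exact hF3 (k + 1) (nk k)
  let μ : X → ℕ := fun w => if h : ∃ m : ℕ, (A ^ m) z.1 = w then h.choose else 0
  have hμ : ∀ w ∈ Set.range (fun m : ℕ => (A ^ m) z.1), (A ^ μ w) z.1 = w := by
    rintro w hw
    have hw' : ∃ m : ℕ, (A ^ m) z.1 = w := hw
    simp only [μ, dif_pos hw']
    exact hw'.choose_spec
  have hbase : Tendsto (fun k => (A ^ nk k) z.1) atTop (𝓝 0) :=
    squeeze_zero_norm (fun k => (hnk2 k).le) (by simpa using aux_const_div_tendsto 1)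
  have hbase2 : Tendsto (fun k => (((k + 1 : ℕ) : 𝕜))⁻¹ • ((A ^ nk k) z.2)) atTop (𝓝 z.1) := by
    rw [tendsto_iff_norm_sub_tendsto_zero]
    apply squeeze_zero (fun k => norm_nonneg _) ?_ (aux_const_div_tendsto 1)
    intro k
    have hrw : (((k + 1 : ℕ) : 𝕜))⁻¹ • ((A ^ nk k) z.2) - z.1
        = (((k + 1 : ℕ) : 𝕜))⁻¹ • ((A ^ nk k) z.2 - ((k + 1 : ℕ) : 𝕜) • z.1) := by
      rw [smul_sub, inv_smul_smul₀ (aux_natCast_ne_zero k)]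
    rw [hrw, norm_smul, aux_norm_inv_natCast]
    have h1 : 1 / ((k : ℝ) + 1) ≤ 1 := by
      rw [div_le_one (by positivity)]
      have : (0 : ℝ) ≤ (k : ℝ) := Nat.cast_nonneg k
      linarith
    calc (1 / ((k : ℝ) + 1)) * ‖(A ^ nk k) z.2 - ((k + 1 : ℕ) : 𝕜) • z.1‖
        ≤ 1 * ‖(A ^ nk k) z.2 - ((k + 1 : ℕ) : 𝕜) • z.1‖ :=
          mul_le_mul_of_nonneg_right h1 (norm_nonneg _)
      _ = ‖(A ^ nk k) z.2 - ((k + 1 : ℕ) : 𝕜) • z.1‖ := one_mul _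
      _ ≤ 1 * (1 / ((k : ℝ) + 1)) := by rw [one_mul]; exact (hnk3 k).le
  refine ⟨_, _, nk, fun k w => (A ^ μ w) ((((k + 1 : ℕ) : 𝕜))⁻¹ • z.2),
    hx, hx, hmono, hpos, ?_, ?_, ?_⟩
  · rintro w ⟨m, rfl⟩
    show Tendsto (fun k => (A ^ nk k) ((A ^ m) z.1)) atTop (𝓝 0)
    have heq : (fun k => (A ^ nk k) ((A ^ m) z.1)) = fun k => (A ^ m) ((A ^ nk k) z.1) :=
      funext fun k => aux_pow_pow_comm A m (nk k) z.1
    rw [heq]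
    have := ((A ^ m).continuous.tendsto 0).comp hbase
    simpa [Function.comp_def, map_zero] using this
  · intro w _
    show Tendsto (fun k => (A ^ μ w) ((((k + 1 : ℕ) : 𝕜))⁻¹ • z.2)) atTop (𝓝 0)
    apply squeeze_zero_norm (a := fun k : ℕ => ‖(A ^ μ w) z.2‖ * (1 / ((k : ℝ) + 1)))
      ?_ (aux_const_div_tendsto _)
    intro k
    rw [ContinuousLinearMap.map_smul, norm_smul, aux_norm_inv_natCast, mul_comm]
  · intro w hw
    show Tendsto (fun k => (A ^ nk k) ((A ^ μ w) ((((k + 1 : ℕ) : 𝕜))⁻¹ • z.2))) atTop (𝓝 w)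
    have heq : (fun k => (A ^ nk k) ((A ^ μ w) ((((k + 1 : ℕ) : 𝕜))⁻¹ • z.2)))
        = fun k => (A ^ μ w) ((((k + 1 : ℕ) : 𝕜))⁻¹ • ((A ^ nk k) z.2)) := by
      funext k
      rw [aux_pow_pow_comm, ContinuousLinearMap.map_smul]
    rw [heq]
    have := ((A ^ μ w).continuous.tendsto z.1).comp hbase2
    rw [hμ w hw] at this
    exact this.congr fun k => rfl

lemma aux_sub_dense [Subsingleton X] {s : Set X} (h : s.Nonempty) : Dense s := by
  intro x
  obtain ⟨y, hy⟩ := h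
  rw [Subsingleton.elim x y]
  exact subset_closure hy

lemma aux_sub_tendsto [Subsingleton X] (f : ℕ → X) (y : X) : Tendsto f atTop (𝓝 y) := by
  have : f = fun _ => y := funext fun k => Subsingleton.elim _ _
  rw [this]
  exact tendsto_const_nhds

lemma aux_sub_hcc [Subsingleton X] (A : X →L[𝕜] X) : HypercyclicityCriterion A :=
  ⟨Set.univ, Set.univ, fun k => k + 1, fun _ _ => 0,
    aux_sub_dense ⟨0, trivial⟩, aux_sub_dense ⟨0, trivial⟩,
    fun a b hab => Nat.succ_lt_succ hab, fun k => Nat.succ_pos k,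
    fun x _ => aux_sub_tendsto _ _, fun y _ => aux_sub_tendsto _ _,
    fun y _ => aux_sub_tendsto _ _⟩

lemma aux_sub_cc [Subsingleton X] (A : X →L[𝕜] X) : CyclicityCriterion A :=
  ⟨Set.univ, Set.univ, fun _ => 0, fun _ _ => 0,
    aux_sub_dense ⟨0, trivial⟩, aux_sub_dense ⟨0, trivial⟩,
    fun x _ => aux_sub_tendsto _ _, fun y _ => aux_sub_tendsto _ _,
    fun y _ => aux_sub_tendsto _ _⟩

lemma aux_sub_cyclic [Subsingleton X] (A : X →L[𝕜] X) : Cyclic A :=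
  ⟨0, aux_sub_dense ⟨0, Submodule.zero_mem _⟩⟩

lemma aux_sub_hyp [Subsingleton X] (A : X →L[𝕜] X) : Hypercyclic A :=
  ⟨0, aux_sub_dense ⟨(A ^ 0) 0, ⟨0, rfl⟩⟩⟩

end Aux

theorem main_theorem [CompleteSpace X] [TopologicalSpace.SeparableSpace X]
    (T S : X →L[𝕜] X) (lam : 𝕜)
    (hTS : T = lam • ContinuousLinearMap.id 𝕜 X + S)
    (hT : Hypercyclic T) :
    List.TFAE [HypercyclicityCriterion T,
               CyclicityCriterion T,
               CyclicityCriterion S,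
               Cyclic (S.prodMap S),
               Cyclic (T.prodMap T),
               Hypercyclic (T.prodMap T)] := by
  rcases subsingleton_or_nontrivial X with hsub | hnt
  · haveI : Subsingleton (X × X) :=
      ⟨fun a b => Prod.ext (Subsingleton.elim _ _) (Subsingleton.elim _ _)⟩
    have h1 : HypercyclicityCriterion T := aux_sub_hcc T
    have h2 : CyclicityCriterion T := aux_sub_cc T
    have h3 : CyclicityCriterion S := aux_sub_cc S
    have h4 : Cyclic (S.prodMap S) := aux_sub_cyclic _
    have h5 : Cyclic (T.prodMap T) := aux_sub_cyclic _
    have h6 : Hypercyclic (T.prodMap T) := aux_sub_hyp _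
    tfae_have 1 → 2 := fun _ => h2
    tfae_have 2 → 3 := fun _ => h3
    tfae_have 3 → 4 := fun _ => h4
    tfae_have 4 → 5 := fun _ => h5
    tfae_have 5 → 6 := fun _ => h6
    tfae_have 6 → 1 := fun _ => h1
    tfae_finish
  · have hST : S = (-lam) • ContinuousLinearMap.id 𝕜 X + T := by
      rw [hTS, neg_smul]; abel
    have hPTS : T.prodMap T = lam • ContinuousLinearMap.id 𝕜 (X × X) + S.prodMap S :=
      aux_prodMap_shift T S lam hTS
    have hPST : S.prodMap S = (-lam) • ContinuousLinearMap.id 𝕜 (X × X) + T.prodMap T :=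
      aux_prodMap_shift S T (-lam) hST
    tfae_have 1 → 2 := aux_hcc_to_cc T
    tfae_have 2 → 3 := aux_cc_shift T S (-lam) hST
    tfae_have 3 → 2 := aux_cc_shift S T lam hTS
    tfae_have 2 → 6 := aux_cc_to_hypProd T hT
    tfae_have 6 → 1 := aux_hypProd_to_hcc T
    tfae_have 6 → 5 := aux_hyp_to_cyc _
    tfae_have 5 → 4 := aux_cyclic_shift (T.prodMap T) (S.prodMap S) (-lam) hPST
    tfae_have 4 → 5 := aux_cyclic_shift (S.prodMap S) (T.prodMap T) lam hPTS
    tfae_have 4 → 3 := aux_cyclicProd_to_cc S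
    tfae_finish
end

section
/- Let T and S be bounded linear operators on a Banach space X over 𝕜 (𝕜 = ℝ or ℂ) with T = λ•I + S for some scalar λ ∈ 𝕜. Then T satisfies the Cyclicity Criterion if and only if S satisfies the Cyclicity Criterion. -/
open Filter Topology Polynomial

variable {𝕜 X : Type*} [RCLike 𝕜] [NormedAddCommGroup X] [NormedSpace 𝕜 X]

lemma cyclicity_criterion_aux [CompleteSpace X]
    (T S : X →L[𝕜] X) (lam : 𝕜)
    (hTS : T = lam • ContinuousLinearMap.id 𝕜 X + S) :
    CyclicityCriterion S → CyclicityCriterion T := by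
  rintro ⟨V, W, p, Sk, hV, hW, h1, h2, h3⟩
  have key : ∀ k, aeval T ((p k).comp (Polynomial.X - Polynomial.C lam)) = aeval S (p k) := by
    intro k
    rw [Polynomial.aeval_comp]
    congr 1
    have : aeval T (Polynomial.X - Polynomial.C lam) = T - algebraMap 𝕜 (X →L[𝕜] X) lam := by
      simp
    rw [this, hTS]
    ext x
    simp [Algebra.algebraMap_eq_smul_one]
  refine ⟨V, W, fun k => (p k).comp (Polynomial.X - Polynomial.C lam), Sk, hV, hW, ?_, h2, ?_⟩
  · intro x hx
    simpa only [key] using h1 x hx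
  · intro x hx
    simpa only [key] using h3 x hx

theorem cyclicity_criterion_iff [CompleteSpace X]
    (T S : X →L[𝕜] X) (lam : 𝕜)
    (hTS : T = lam • ContinuousLinearMap.id 𝕜 X + S) :
    CyclicityCriterion T ↔ CyclicityCriterion S := by
  constructor
  · apply cyclicity_criterion_aux S T (-lam)
    rw [hTS]
    ext x
    simp
  · exact cyclicity_criterion_aux T S lam hTS
end

section
/- Let T = λ•I + S be a hypercyclic bounded linear operator on a separable Banach space X over 𝕜 (𝕜 = ℝ or ℂ), where λ ∈ 𝕜 and S is a bounded linear operator on X. Then S is cyclic and S has dense range. -/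
open Filter Topology Polynomial

variable {𝕜 X : Type*} [RCLike 𝕜] [NormedAddCommGroup X] [NormedSpace 𝕜 X]

theorem cyclic_denseRange_of_hypercyclic_shift
    [CompleteSpace X] [TopologicalSpace.SeparableSpace X]
    (T S : X →L[𝕜] X) (lam : 𝕜)
    (hTS : T = lam • ContinuousLinearMap.id 𝕜 X + S)
    (hT : Hypercyclic T) :
    Cyclic S ∧ DenseRange ⇑S := by
  obtain ⟨x, hx⟩ := hT
  have hTapp : ∀ y : X, T y = lam • y + S y := by
    intro y; rw [hTS]; rfl
  constructor
  · refine ⟨x, ?_⟩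
    set M := Submodule.span 𝕜 (Set.range fun n : ℕ => (S ^ n) x) with hM
    have hSM : ∀ y ∈ M, S y ∈ M := by
      intro y hy
      induction hy using Submodule.span_induction with
      | mem z hz =>
        obtain ⟨n, rfl⟩ := hz
        exact Submodule.subset_span ⟨n + 1, by simp [pow_succ']⟩
      | zero => simp
      | add a b _ _ ha hb => rw [map_add]; exact M.add_mem ha hb
      | smul c a _ ha => rw [map_smul]; exact M.smul_mem c ha
    have horb : ∀ n : ℕ, (T ^ n) x ∈ M := by
      intro n
      induction n with
      | zero => exact Submodule.subset_span ⟨0, by simp⟩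
      | succ n ih =>
        have h1 : (T ^ (n + 1)) x = lam • (T ^ n) x + S ((T ^ n) x) := by
          rw [pow_succ', ContinuousLinearMap.mul_apply, hTapp]
        rw [h1]
        exact M.add_mem (M.smul_mem _ ih) (hSM _ ih)
    exact hx.mono (Set.range_subset_iff.mpr horb)
  · by_contra hdr
    -- build a nonzero functional vanishing on range S
    set N := (LinearMap.range (S : X →ₗ[𝕜] X)).topologicalClosure with hN
    have hNclosed : IsClosed (N : Set X) := (LinearMap.range (S : X →ₗ[𝕜] X)).isClosed_topologicalClosure
    obtain ⟨x₀, hx₀⟩ : ∃ x₀ : X, x₀ ∉ closure (Set.range ⇑S) := by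
      by_contra h
      push_neg at h
      exact hdr fun z => h z
    have hx₀N : x₀ ∉ N := by
      intro h
      apply hx₀
      have : (N : Set X) = closure (Set.range ⇑S) := by
        rw [hN, Submodule.topologicalClosure_coe]
        congr 1
      rw [← this]; exact h
    haveI : IsClosed (N : Set X) := hNclosed
    let q : X →L[𝕜] X ⧸ N :=
      LinearMap.mkContinuous N.mkQ 1
        (fun m => by simpa using Submodule.Quotient.norm_mk_le N m)
    have hq : ∀ m : X, q m = Submodule.Quotient.mk m := fun m => rfl
    have hz₀ : q x₀ ≠ 0 := by
      rw [hq, Ne, Submodule.Quotient.mk_eq_zero]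
      exact hx₀N
    obtain ⟨g, -, hg⟩ := exists_dual_vector 𝕜 (q x₀) (norm_ne_zero_iff.mpr hz₀)
    set φ : X →L[𝕜] 𝕜 := g.comp q with hφ
    have hφS : ∀ y : X, φ (S y) = 0 := by
      intro y
      have : q (S y) = 0 := by
        rw [hq, Submodule.Quotient.mk_eq_zero]
        exact Submodule.le_topologicalClosure _ (LinearMap.mem_range_self (S : X →ₗ[𝕜] X) y)
      simp [hφ, this]
    have hφx₀ : φ x₀ ≠ 0 := by
      simp only [hφ, ContinuousLinearMap.comp_apply, hg]
      exact_mod_cast norm_ne_zero_iff.mpr hz₀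
    have hsurj : Function.Surjective ⇑φ := by
      intro c
      refine ⟨(c / φ x₀) • x₀, ?_⟩
      rw [map_smul, smul_eq_mul, div_mul_cancel₀ _ hφx₀]
    have hφT : ∀ y : X, φ (T y) = lam * φ y := by
      intro y
      rw [hTapp, map_add, map_smul, hφS, add_zero, smul_eq_mul]
    have hpow : ∀ n : ℕ, φ ((T ^ n) x) = lam ^ n * φ x := by
      intro n
      induction n with
      | zero => simp
      | succ n ih =>
        rw [pow_succ', ContinuousLinearMap.mul_apply, hφT, ih, pow_succ']
        ring
    have hd : DenseRange (fun n : ℕ => lam ^ n * φ x) := by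
      have h := (hsurj.denseRange).comp (g := ⇑φ) hx φ.continuous
      have he : (⇑φ ∘ fun n : ℕ => (T ^ n) x) = fun n : ℕ => lam ^ n * φ x := by
        funext n; exact hpow n
      rwa [he] at h
    set c := φ x with hc
    by_cases hc0 : c = 0
    · have h1 := hd 1
      rw [hc0] at h1
      simp only [mul_zero, Set.range_const, closure_singleton, Set.mem_singleton_iff] at h1
      exact one_ne_zero h1
    · rcases le_or_gt ‖lam‖ 1 with hl | hl
      · obtain ⟨y, ⟨n, rfl⟩, hy⟩ :=
          Metric.mem_closure_iff.mp (hd (((‖c‖ + 1 : ℝ) : 𝕜))) 1 one_pos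
        have h1 : ‖lam ^ n * c‖ ≤ ‖c‖ := by
          rw [norm_mul, norm_pow]
          have := pow_le_one₀ (norm_nonneg lam) hl (n := n)
          nlinarith [norm_nonneg c]
        have h2 : ‖(((‖c‖ + 1 : ℝ) : 𝕜))‖ = ‖c‖ + 1 := by
          rw [RCLike.norm_ofReal, abs_of_nonneg (by positivity)]
        rw [dist_eq_norm] at hy
        have h3 := norm_sub_norm_le (((‖c‖ + 1 : ℝ) : 𝕜)) (lam ^ n * c)
        rw [h2] at h3
        linarith
      · obtain ⟨y, ⟨n, rfl⟩, hy⟩ :=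
          Metric.mem_closure_iff.mp (hd 0) ‖c‖ (norm_pos_iff.mpr hc0)
        rw [dist_zero_left] at hy
        have h1 : ‖c‖ ≤ ‖lam ^ n * c‖ := by
          rw [norm_mul, norm_pow]
          have h2 : (1 : ℝ) ≤ ‖lam‖ ^ n := one_le_pow₀ hl.le
          nlinarith [norm_nonneg c]
        linarith
end

section
/- Let T = λ•I + S be a hypercyclic bounded linear operator on a separable Banach space X over 𝕜 (𝕜 = ℝ or ℂ), where λ ∈ 𝕜 and S is a bounded linear operator on X. Then for every nonzero polynomial p over 𝕜, the operator p(S) has dense range. -/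
open Filter Topology Polynomial

variable {𝕜 X : Type*} [RCLike 𝕜] [NormedAddCommGroup X] [NormedSpace 𝕜 X]

theorem exists_functional_of_ne_top {E : Type*} [NormedAddCommGroup E] [NormedSpace 𝕜 E]
    (M : Submodule 𝕜 E) (h : M.topologicalClosure ≠ ⊤) :
    ∃ φ : E →L[𝕜] 𝕜, φ ≠ 0 ∧ ∀ y ∈ M, φ y = 0 := by
  set N := M.topologicalClosure with hN
  haveI : IsClosed (N : Set E) := M.isClosed_topologicalClosure
  obtain ⟨x, hx⟩ : ∃ x, x ∉ N := by
    by_contra h'; push_neg at h'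
    exact h (Submodule.eq_top_iff'.mpr h')
  have hxne : (Submodule.Quotient.mk x : E ⧸ N) ≠ 0 := by
    simpa [Submodule.Quotient.mk_eq_zero] using hx
  obtain ⟨g, hg1, hg2⟩ := exists_dual_vector 𝕜 _ (norm_ne_zero_iff.mpr hxne)
  have hcont : Continuous N.mkQ := by
    refine (N.mkQ.mkContinuous 1 ?_).continuous
    intro y
    simpa using Submodule.Quotient.norm_mk_le N y
  let mkC : E →L[𝕜] E ⧸ N := ⟨N.mkQ, hcont⟩
  refine ⟨g.comp mkC, ?_, ?_⟩
  · intro h0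
    have : g (Submodule.Quotient.mk x) = 0 := by
      have := congrFun (congrArg (fun f : E →L[𝕜] 𝕜 => (f : E → 𝕜)) h0) x
      simpa [mkC] using this
    rw [hg2] at this
    exact hxne (by simpa using this)
  · intro y hy
    have : N.mkQ y = 0 := by
      simpa [Submodule.Quotient.mk_eq_zero] using M.le_topologicalClosure hy
    simp [mkC, this]

/-- main work lemma -/
theorem denseRange_aeval_of_hypercyclic (T : X →L[𝕜] X) (hT : Hypercyclic T) :
    ∀ p : Polynomial 𝕜, p ≠ 0 → DenseRange ⇑(aeval T p) := by
  obtain ⟨x, hx⟩ := hT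
  by_cases hsub : Subsingleton X
  · intro p _ y
    have : y = aeval T p 0 := Subsingleton.elim _ _
    exact this ▸ subset_closure ⟨0, rfl⟩
  haveI : Nontrivial X := not_subsingleton_iff_nontrivial.mp hsub
  -- the key claim
  have key : ¬ ∃ n : ℕ, ∃ p : Polynomial 𝕜, p ≠ 0 ∧ p.natDegree = n ∧
      ∃ φ : X →L[𝕜] 𝕜, φ ≠ 0 ∧ ∀ y, φ (aeval T p y) = 0 := by
    rintro hex
    classical
    let d := Nat.find hex
    obtain ⟨p, hp0, hpd', φ, hφ0, hφp⟩ := Nat.find_spec hex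
    have hpd : p.natDegree = d := hpd'
    have hmin : ∀ m < d, ¬ ∃ p : Polynomial 𝕜, p ≠ 0 ∧ p.natDegree = m ∧
        ∃ φ : X →L[𝕜] 𝕜, φ ≠ 0 ∧ ∀ y, φ (aeval T p y) = 0 := fun m hm => Nat.find_min hex hm
    have hd1 : 1 ≤ d := by
      by_contra h
      have hd0 : p.natDegree = 0 := by omega
      have hpC : p = C (p.coeff 0) := Polynomial.eq_C_of_natDegree_eq_zero hd0
      have hc0 : p.coeff 0 ≠ 0 := fun h0 => hp0 (by rw [hpC, h0, map_zero])
      apply hφ0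
      ext y
      have := hφp y
      rw [hpC] at this
      simp only [aeval_C] at this
      rw [Algebra.algebraMap_eq_smul_one] at this
      simp only [ContinuousLinearMap.smul_apply, ContinuousLinearMap.one_apply,
        map_smul, smul_eq_mul] at this
      have := (mul_eq_zero.mp this).resolve_left hc0
      simpa using this
    -- the scalar sequence
    set s : X → ℕ → 𝕜 := fun y n => φ ((T ^ n) y) with hs
    have hcd : p.coeff d ≠ 0 := by
      rw [← hpd]
      exact fun h => hp0 (Polynomial.leadingCoeff_eq_zero.mp h)
    have hrec : ∀ y : X, ∑ k ∈ Finset.range (d + 1), p.coeff k * s y k = 0 := by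
      intro y
      have h := hφp y
      rw [Polynomial.aeval_eq_sum_range, hpd] at h
      simpa only [ContinuousLinearMap.sum_apply, ContinuousLinearMap.smul_apply,
        map_sum, map_smul, smul_eq_mul, hs] using h
    have hshift : ∀ (y : X) (i k : ℕ), s ((T ^ i) y) k = s y (k + i) := by
      intro y i k
      show φ ((T ^ k) ((T ^ i) y)) = φ ((T ^ (k + i)) y)
      rw [pow_add, ContinuousLinearMap.mul_apply]
    have hsurj : Function.Surjective (fun y => fun k : Fin d => s y (k : ℕ)) := by
      classical
      set L : X →ₗ[𝕜] (Fin d → 𝕜) :=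
        LinearMap.pi (fun k : Fin d => ((φ.comp (T ^ (k : ℕ))) : X →ₗ[𝕜] 𝕜)) with hL
      have hLapp : ∀ (y : X) (k : Fin d), L y k = s y (k : ℕ) := by
        intro y k; rfl
      by_contra hns
      have hne : LinearMap.range L ≠ ⊤ := by
        intro htop
        have hsurj' := LinearMap.range_eq_top.mp htop
        apply hns
        intro v
        obtain ⟨y, hy⟩ := hsurj' v
        refine ⟨y, funext fun k => ?_⟩
        show s y (k : ℕ) = v k
        rw [← hLapp y k, hy]
      have hclosed : IsClosed ((LinearMap.range L : Submodule 𝕜 (Fin d → 𝕜)) : Set (Fin d → 𝕜)) :=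
        Submodule.closed_of_finiteDimensional _
      have hne' : (LinearMap.range L).topologicalClosure ≠ ⊤ := by
        rw [hclosed.submodule_topologicalClosure_eq]; exact hne
      obtain ⟨η, hη0, hη⟩ := exists_functional_of_ne_top _ hne'
      set t : Fin d → 𝕜 := fun k => η (Pi.single k 1) with ht
      have hsingle : ∀ i : Fin d, (fun j => if i = j then (1:𝕜) else 0) = Pi.single i 1 := by
        intro i; funext j; simp [Pi.single_apply, eq_comm]
      have hηv : ∀ v : Fin d → 𝕜, η v = ∑ k, v k * t k := by
        intro v
        conv_lhs => rw [pi_eq_sum_univ v]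
        rw [map_sum]
        refine Finset.sum_congr rfl fun k _ => ?_
        rw [hsingle k, map_smul, smul_eq_mul]
      obtain ⟨k₀, hk₀⟩ : ∃ k, t k ≠ 0 := by
        by_contra hall
        push_neg at hall
        apply hη0
        ext v
        rw [hηv]
        simp [hall]
      set g : Polynomial 𝕜 := ∑ k : Fin d, C (t k) * (Polynomial.X : Polynomial 𝕜) ^ (k : ℕ) with hgdef
      have hgc : ∀ k : Fin d, g.coeff (k : ℕ) = t k := by
        intro k
        rw [hgdef, Polynomial.finset_sum_coeff]
        rw [Finset.sum_eq_single k]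
        · simp [Polynomial.coeff_C_mul, Polynomial.coeff_X_pow]
        · intro b _ hb
          simp only [Polynomial.coeff_C_mul, Polynomial.coeff_X_pow]
          rw [if_neg (fun h => hb (Fin.val_injective h.symm))]
          ring
        · simp
      have hg0 : g ≠ 0 := fun h => hk₀ (by rw [← hgc k₀, h, Polynomial.coeff_zero])
      have hgd : g.natDegree < d := by
        rw [Polynomial.natDegree_lt_iff_degree_lt hg0]
        apply lt_of_le_of_lt (Polynomial.degree_sum_le _ _)
        rw [Finset.sup_lt_iff (by exact_mod_cast WithBot.bot_lt_coe d)]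
        intro k _
        apply lt_of_le_of_lt (Polynomial.degree_C_mul_X_pow_le _ _)
        exact_mod_cast k.isLt
      have hgφ : ∀ y, φ (aeval T g y) = 0 := by
        intro y
        have h1 : φ (aeval T g y) = ∑ k : Fin d, t k * s y (k : ℕ) := by
          rw [hgdef, map_sum, ContinuousLinearMap.sum_apply, map_sum]
          refine Finset.sum_congr rfl fun k _ => ?_
          rw [map_mul, Polynomial.aeval_C, Polynomial.aeval_X_pow,
            Algebra.algebraMap_eq_smul_one]
          show φ (((t k • (1 : X →L[𝕜] X)) * T ^ (k:ℕ)) y) = _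
          rw [ContinuousLinearMap.mul_apply]
          simp only [ContinuousLinearMap.smul_apply, ContinuousLinearMap.one_apply,
            map_smul, smul_eq_mul]
          rfl
        have h2 : ∑ k : Fin d, t k * s y (k : ℕ) = η (L y) := by
          rw [hηv (L y)]
          refine Finset.sum_congr rfl fun k _ => ?_
          rw [hLapp, mul_comm]
        rw [h1, h2, hη _ ⟨y, rfl⟩]
      exact hmin g.natDegree hgd ⟨g, hg0, rfl, φ, hφ0, hgφ⟩
    -- the Hankel determinant
    set G : X → 𝕜 := fun y => Matrix.det (Matrix.of fun i j : Fin d => s y ((i : ℕ) + (j : ℕ)))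
      with hG
    have hGcont : Continuous G := by
      apply Continuous.matrix_det
      apply continuous_matrix
      intro i j
      exact (φ.comp (T ^ ((i : ℕ) + (j : ℕ)))).continuous
    obtain ⟨ρ, hGT⟩ : ∃ ρ : 𝕜, ∀ y, G (T y) = ρ * G y := by
      classical
      set A : Matrix (Fin d) (Fin d) 𝕜 := Matrix.of fun k j : Fin d =>
        if _ : (j : ℕ) + 1 < d then (if (k : ℕ) = (j : ℕ) + 1 then (1:𝕜) else 0)
        else -(p.coeff (k : ℕ) / p.coeff d) with hA
      refine ⟨A.det, fun y => ?_⟩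
      have hsTy : ∀ n : ℕ, s (T y) n = s y (n + 1) := by
        intro n
        have h := hshift y 1 n
        rwa [pow_one] at h
      have hM : (Matrix.of fun i j : Fin d => s (T y) ((i : ℕ) + (j : ℕ)))
          = (Matrix.of fun i j : Fin d => s y ((i : ℕ) + (j : ℕ))) * A := by
        ext i j
        rw [Matrix.mul_apply]
        by_cases hj : (j : ℕ) + 1 < d
        · have hterm : ∀ k : Fin d,
              (Matrix.of fun i j : Fin d => s y ((i : ℕ) + (j : ℕ))) i k * A k j
              = s y ((i : ℕ) + (k : ℕ)) * (if (k : ℕ) = (j : ℕ) + 1 then (1:𝕜) else 0) := by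
            intro k
            rw [hA]
            simp only [Matrix.of_apply]
            rw [dif_pos hj]
          rw [Finset.sum_congr rfl fun k _ => hterm k]
          rw [Finset.sum_eq_single_of_mem (⟨(j : ℕ) + 1, hj⟩ : Fin d) (Finset.mem_univ _)
            (fun b _ hb => by
              rw [if_neg (fun h => hb (Fin.ext h)), mul_zero])]
          simp only [if_true, mul_one, Matrix.of_apply]
          rw [hsTy]
          congr 1
        · have hjd : (j : ℕ) + 1 = d := by
            have := j.isLt
            omega
          have hterm : ∀ k : Fin d,
              (Matrix.of fun i j : Fin d => s y ((i : ℕ) + (j : ℕ))) i k * A k j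
              = s y ((i : ℕ) + (k : ℕ)) * -(p.coeff (k : ℕ) / p.coeff d) := by
            intro k
            rw [hA]
            simp only [Matrix.of_apply]
            rw [dif_neg hj]
          rw [Finset.sum_congr rfl fun k _ => hterm k]
          have h0 : ∑ k ∈ Finset.range (d + 1), p.coeff k * s y (k + (i : ℕ)) = 0 := by
            have h := hrec ((T ^ (i : ℕ)) y)
            simpa only [hshift] using h
          rw [Finset.sum_range_succ] at h0
          have hsum : ∑ k ∈ Finset.range d, p.coeff k * s y (k + (i : ℕ))
              = -(p.coeff d * s y (d + (i : ℕ))) := eq_neg_of_add_eq_zero_left h0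
          have hL : (Matrix.of fun i j : Fin d => s (T y) ((i : ℕ) + (j : ℕ))) i j
              = s y (d + (i : ℕ)) := by
            simp only [Matrix.of_apply]
            rw [hsTy]
            congr 1
            omega
          rw [hL]
          rw [Fin.sum_univ_eq_sum_range (fun k => s y ((i : ℕ) + k) * -(p.coeff k / p.coeff d)) d]
          have hcongr : ∀ k ∈ Finset.range d, s y ((i : ℕ) + k) * -(p.coeff k / p.coeff d)
              = -(p.coeff k * s y (k + (i : ℕ))) / p.coeff d := by
            intro k _
            rw [add_comm (i : ℕ) k, div_eq_mul_inv, div_eq_mul_inv]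
            ring
          rw [Finset.sum_congr rfl hcongr, ← Finset.sum_div, Finset.sum_neg_distrib, hsum,
            neg_neg, mul_div_cancel_left₀ _ hcd]
      show Matrix.det _ = A.det * Matrix.det _
      rw [hM, Matrix.det_mul, mul_comm]
    have hGn : ∀ n : ℕ, G ((T ^ n) x) = ρ ^ n * G x := by
      intro n
      induction n with
      | zero => simp
      | succ n ih =>
        have : (T ^ (n + 1)) x = T ((T ^ n) x) := by
          rw [pow_succ', ContinuousLinearMap.mul_apply]
        rw [this, hGT, ih]
        ring
    have hGsmul : ∀ (c : 𝕜) (y : X), G (c • y) = c ^ d * G y := by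
      intro c y
      have hM : (Matrix.of fun i j : Fin d => s (c • y) ((i : ℕ) + (j : ℕ)))
          = c • (Matrix.of fun i j : Fin d => s y ((i : ℕ) + (j : ℕ))) := by
        ext i j
        show φ ((T ^ ((i:ℕ)+(j:ℕ))) (c • y)) = c * φ ((T ^ ((i:ℕ)+(j:ℕ))) y)
        rw [map_smul, map_smul, smul_eq_mul]
      show Matrix.det _ = c ^ d * Matrix.det _
      rw [hM, Matrix.det_smul]
      simp [Fintype.card_fin, smul_eq_mul]
    obtain ⟨y₀, hy₀⟩ : ∃ y₀ : X, ‖G y₀‖ = 1 := by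
      classical
      have hd0 : d - 1 < d := by omega
      obtain ⟨y₀, hy₀⟩ := hsurj (Pi.single (⟨d - 1, hd0⟩ : Fin d) 1)
      refine ⟨y₀, ?_⟩
      have hsy : ∀ n : ℕ, n < d → s y₀ n = if n = d - 1 then 1 else 0 := by
        intro n hn
        have h := congrFun hy₀ (⟨n, hn⟩ : Fin d)
        simp only at h
        rw [h, Pi.single_apply]
        by_cases hnd : n = d - 1
        · rw [if_pos (Fin.ext hnd), if_pos hnd]
        · rw [if_neg (fun hc => hnd (by simpa [Fin.ext_iff] using hc)), if_neg hnd]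
      set M₀ : Matrix (Fin d) (Fin d) 𝕜 :=
        Matrix.of fun i j : Fin d => s y₀ ((i : ℕ) + (j : ℕ)) with hM₀
      have hB : Matrix.det (M₀.submatrix id ⇑(Fin.revPerm : Equiv.Perm (Fin d))) = 1 := by
        rw [Matrix.det_of_lowerTriangular]
        · refine Finset.prod_eq_one fun i _ => ?_
          have hrev : ((Fin.rev i : Fin d) : ℕ) = d - 1 - (i : ℕ) := by
            simp [Fin.rev]
            omega
          show M₀ i (Fin.rev i) = 1
          rw [hM₀]
          simp only [Matrix.of_apply]
          have hidx : (i : ℕ) + (d - 1 - (i : ℕ)) = d - 1 := by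
            have := i.isLt
            omega
          rw [hrev, hidx, hsy (d - 1) hd0, if_pos rfl]
        · intro i j hij
          have hij' : i < j := hij
          have hrev : ((Fin.rev j : Fin d) : ℕ) = d - 1 - (j : ℕ) := by
            simp [Fin.rev]
            omega
          show M₀ i (Fin.rev j) = 0
          rw [hM₀]
          simp only [Matrix.of_apply]
          have hjlt := j.isLt
          have hilt : (i : ℕ) < (j : ℕ) := hij'
          rw [hrev, hsy _ (by omega), if_neg (by omega)]
      have hperm := Matrix.det_permute' (Fin.revPerm : Equiv.Perm (Fin d)) M₀
      rw [hB] at hperm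
      have hGy : G y₀ = M₀.det := rfl
      rcases Int.units_eq_one_or (Equiv.Perm.sign (Fin.revPerm : Equiv.Perm (Fin d))) with hsgn | hsgn
      · rw [hsgn] at hperm
        simp only [Units.val_one, Int.cast_one, one_mul] at hperm
        rw [hGy, ← hperm, norm_one]
      · rw [hsgn] at hperm
        have hdet : M₀.det = -1 := by
          have h2 : (1 : 𝕜) = -M₀.det := by
            simpa using hperm
          linear_combination h2
        rw [hGy, hdet, norm_neg, norm_one]
    by_cases hcase : ρ = 0 ∨ G x = 0
    · -- G vanishes on a dense set, contradiction
      haveI : NeBot (𝓝[≠] x) := Module.punctured_nhds_neBot 𝕜 X x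
      have hdense : Dense ((Set.range fun n : ℕ => (T ^ n) x) \ {x}) := hx.diff_singleton x
      have hzero : ∀ y ∈ (Set.range fun n : ℕ => (T ^ n) x) \ {x}, G y = 0 := by
        rintro y ⟨⟨n, rfl⟩, hyne⟩
        rcases hcase with h0 | h0
        · have hn : n ≠ 0 := by
            rintro rfl; exact hyne (by simp)
          rw [hGn, h0, zero_pow hn, zero_mul]
        · rw [hGn, h0, mul_zero]
      have : G = fun _ => (0 : 𝕜) :=
        Continuous.ext_on hdense hGcont continuous_const hzero
      rw [this] at hy₀
      simpa using hy₀
    · push_neg at hcase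
      obtain ⟨hρ, hGx⟩ := hcase
      set β := ‖G x‖ with hβ
      have hβ0 : 0 < β := norm_pos_iff.mpr hGx
      set r := ‖ρ‖ with hr
      have hr0 : 0 < r := norm_pos_iff.mpr hρ
      -- choose target norm
      set s₀ : ℝ := if 1 ≤ r then β / 2 else 2 * β with hs₀
      have hs₀pos : 0 < s₀ := by
        rw [hs₀]; split <;> linarith
      -- a point with ‖G w‖ = s₀
      obtain ⟨w, hw⟩ : ∃ w : X, ‖G w‖ = s₀ := by
        refine ⟨((s₀ ^ ((d : ℝ)⁻¹) : ℝ) : 𝕜) • y₀, ?_⟩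
        rw [hGsmul, norm_mul, norm_pow, hy₀, mul_one, RCLike.norm_ofReal,
          abs_of_nonneg (Real.rpow_nonneg hs₀pos.le _),
          ← Real.rpow_natCast (s₀ ^ ((d : ℝ)⁻¹)) d, ← Real.rpow_mul hs₀pos.le]
        rw [inv_mul_cancel₀ (by exact_mod_cast (by omega : d ≠ 0))]
        exact Real.rpow_one s₀
      -- continuity at w
      set ε : ℝ := if 1 ≤ r then β / 4 else β / 2 with hε
      have hεpos : 0 < ε := by
        rw [hε]; split <;> linarith
      obtain ⟨δ, hδ0, hδ⟩ := Metric.continuousAt_iff.mp (hGcont.continuousAt (x := w)) ε hεpos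
      obtain ⟨n, hn⟩ : ∃ n : ℕ, dist ((T ^ n) x) w < δ := by
        have := hx.exists_dist_lt w hδ0
        obtain ⟨y, ⟨n, rfl⟩, hy⟩ := this  -- may need rework
        exact ⟨n, by simpa [dist_comm] using hy⟩
      have hGnear : dist (G ((T ^ n) x)) (G w) < ε := hδ hn
      have hnorm : ‖G ((T ^ n) x)‖ = r ^ n * β := by
        rw [hGn, norm_mul, norm_pow]
      have habs : |‖G ((T ^ n) x)‖ - s₀| < ε := by
        calc |‖G ((T ^ n) x)‖ - s₀| = |‖G ((T ^ n) x)‖ - ‖G w‖| := by rw [hw]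
        _ ≤ ‖G ((T ^ n) x) - G w‖ := abs_norm_sub_norm_le _ _
        _ < ε := by rwa [dist_eq_norm] at hGnear
      by_cases h1r : 1 ≤ r
      · have h1 : β ≤ r ^ n * β := le_mul_of_one_le_left hβ0.le (one_le_pow₀ h1r)
        rw [hs₀, if_pos h1r] at habs
        rw [hε, if_pos h1r] at habs
        rw [hnorm] at habs
        rw [abs_lt] at habs
        linarith
      · push_neg at h1r
        have h1 : r ^ n * β ≤ β := by
          have : r ^ n ≤ 1 := pow_le_one₀ hr0.le h1r.le
          nlinarith
        rw [hs₀, if_neg (not_le.mpr h1r)] at habs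
        rw [hε, if_neg (not_le.mpr h1r)] at habs
        rw [hnorm] at habs
        rw [abs_lt] at habs
        linarith
  -- conclude
  intro p hp
  by_contra hdr
  apply key
  refine ⟨p.natDegree, p, hp, rfl, ?_⟩
  have hne : (LinearMap.range ((aeval T p : X →L[𝕜] X) : X →ₗ[𝕜] X)).topologicalClosure ≠ ⊤ := by
    intro htop
    apply hdr
    have : closure (Set.range ⇑(aeval T p)) = Set.univ := by
      have := congrArg (fun S : Submodule 𝕜 X => (S : Set X)) htop
      simpa [Submodule.topologicalClosure_coe, LinearMap.coe_range] using this
    rw [DenseRange, dense_iff_closure_eq]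
    exact this
  obtain ⟨φ, hφ0, hφ⟩ := exists_functional_of_ne_top _ hne
  exact ⟨φ, hφ0, fun y => hφ _ ⟨y, rfl⟩⟩

theorem denseRange_aeval_of_hypercyclic_shift
    [CompleteSpace X] [TopologicalSpace.SeparableSpace X]
    (T S : X →L[𝕜] X) (lam : 𝕜)
    (hTS : T = lam • ContinuousLinearMap.id 𝕜 X + S)
    (hT : Hypercyclic T) :
    ∀ p : Polynomial 𝕜, p ≠ 0 → DenseRange ⇑(aeval S p) := by
  intro p hp
  have hS : aeval T ((Polynomial.X : Polynomial 𝕜) - C lam) = S := by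
    rw [map_sub, aeval_X, aeval_C, Algebra.algebraMap_eq_smul_one, hTS]
    have : (1 : X →L[𝕜] X) = ContinuousLinearMap.id 𝕜 X := rfl
    rw [this]
    abel
  set q : Polynomial 𝕜 := p.comp ((Polynomial.X : Polynomial 𝕜) - C lam) with hq
  have hq0 : q ≠ 0 := by
    intro h0
    apply hp
    have hcomp : ((Polynomial.X : Polynomial 𝕜) - C lam).comp
        ((Polynomial.X : Polynomial 𝕜) + C lam) = Polynomial.X := by
      rw [Polynomial.sub_comp, Polynomial.X_comp, Polynomial.C_comp]
      ring
    have : p = q.comp ((Polynomial.X : Polynomial 𝕜) + C lam) := by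
      rw [hq, Polynomial.comp_assoc, hcomp, Polynomial.comp_X]
    rw [this, h0, Polynomial.zero_comp]
  have : aeval S p = aeval T q := by
    rw [hq, Polynomial.aeval_comp, hS]
  rw [this]
  exact denseRange_aeval_of_hypercyclic T hT q hq0
end

section
/- Let F be the forward shift operator on ℓ²(ℕ) over 𝕜 (𝕜 = ℝ or ℂ), defined by F(x₀, x₁, x₂, …) = (0, x₀, x₁, …). Then for every scalar λ ∈ 𝕜, the operator λ•I + F is not hypercyclic. -/
open Filter Topology

/-- For every scalar `λ`, the operator `λ • I + F`, where `F` is the forward shift on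
`ℓ²(ℕ)`, is not hypercyclic. -/
theorem smul_id_add_forward_shift_not_hypercyclic {𝕜 : Type*} [RCLike 𝕜]
    (F : lp (fun _ : ℕ => 𝕜) 2 →L[𝕜] lp (fun _ : ℕ => 𝕜) 2)
    (hF0 : ∀ x : lp (fun _ : ℕ => 𝕜) 2, (F x : ∀ _ : ℕ, 𝕜) 0 = 0)
    (hFs : ∀ (x : lp (fun _ : ℕ => 𝕜) 2) (n : ℕ),
      (F x : ∀ _ : ℕ, 𝕜) (n + 1) = (x : ∀ _ : ℕ, 𝕜) n)
    (lam : 𝕜) :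
    ¬ ∃ x : lp (fun _ : ℕ => 𝕜) 2,
        Dense (Set.range fun n : ℕ =>
          ((lam • ContinuousLinearMap.id 𝕜 (lp (fun _ : ℕ => 𝕜) 2) + F) ^ n) x) := by
  rintro ⟨x, hx⟩
  set T := lam • ContinuousLinearMap.id 𝕜 (lp (fun _ : ℕ => 𝕜) 2) + F with hT
  set a : 𝕜 := (x : ∀ _ : ℕ, 𝕜) 0 with ha
  -- coordinate 0 of T^n x is lam^n * a
  have key : ∀ n : ℕ, ((T ^ n) x : ∀ _ : ℕ, 𝕜) 0 = lam ^ n * a := by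
    intro n
    induction n with
    | zero => simp [ha]
    | succ n ih =>
      have : (T ^ (n + 1)) x = T ((T ^ n) x) := by
        rw [pow_succ' T n]; rfl
      rw [this, hT]
      have : ((lam • ContinuousLinearMap.id 𝕜 (lp (fun _ : ℕ => 𝕜) 2) + F)
          ((T ^ n) x) : ∀ _ : ℕ, 𝕜) 0
          = lam * ((T ^ n) x : ∀ _ : ℕ, 𝕜) 0 + (F ((T ^ n) x) : ∀ _ : ℕ, 𝕜) 0 := by
        simp [lp.coeFn_add, lp.coeFn_smul, Pi.add_apply, Pi.smul_apply, smul_eq_mul]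
        rfl
      rw [this, hF0, add_zero, ih, pow_succ]
      ring
  -- choose a target y and gap δ
  obtain ⟨y, δ, hδ, hy⟩ : ∃ (y : 𝕜) (δ : ℝ), 0 < δ ∧ ∀ n : ℕ, δ ≤ ‖lam ^ n * a - y‖ := by
    by_cases hcase : ‖lam‖ ≤ 1 ∨ a = 0
    · refine ⟨((‖a‖ + 1 : ℝ) : 𝕜), 1, one_pos, fun n => ?_⟩
      have hbound : ‖lam ^ n * a‖ ≤ ‖a‖ := by
        rcases hcase with h | h
        · calc ‖lam ^ n * a‖ = ‖lam‖ ^ n * ‖a‖ := by rw [norm_mul, norm_pow]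
            _ ≤ 1 * ‖a‖ := by
                exact mul_le_mul_of_nonneg_right (pow_le_one₀ (norm_nonneg _) h)
                  (norm_nonneg _)
            _ = ‖a‖ := one_mul _
        · simp [h]
      have hyn : ‖((‖a‖ + 1 : ℝ) : 𝕜)‖ = ‖a‖ + 1 := by
        rw [RCLike.norm_ofReal, abs_of_nonneg (by positivity)]
      calc (1 : ℝ) = (‖a‖ + 1) - ‖a‖ := by ring
        _ ≤ ‖((‖a‖ + 1 : ℝ) : 𝕜)‖ - ‖lam ^ n * a‖ := by rw [hyn]; linarith
        _ ≤ ‖lam ^ n * a - ((‖a‖ + 1 : ℝ) : 𝕜)‖ := by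
            have := norm_sub_norm_le (((‖a‖ + 1 : ℝ) : 𝕜)) (lam ^ n * a)
            rw [norm_sub_rev]; linarith [abs_le.mp (abs_norm_sub_norm_le
              (((‖a‖ + 1 : ℝ) : 𝕜)) (lam ^ n * a))]
    · push_neg at hcase
      obtain ⟨hlam, ha0⟩ := hcase
      refine ⟨((‖a‖ / 2 : ℝ) : 𝕜), ‖a‖ / 2, half_pos (norm_pos_iff.mpr ha0), fun n => ?_⟩
      have hbound : ‖a‖ ≤ ‖lam ^ n * a‖ := by
        rw [norm_mul, norm_pow]
        calc ‖a‖ = 1 * ‖a‖ := (one_mul _).symm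
          _ ≤ ‖lam‖ ^ n * ‖a‖ :=
              mul_le_mul_of_nonneg_right (one_le_pow₀ hlam.le) (norm_nonneg _)
      have hyn : ‖((‖a‖ / 2 : ℝ) : 𝕜)‖ = ‖a‖ / 2 := by
        rw [RCLike.norm_ofReal, abs_of_nonneg (by positivity)]
      calc ‖a‖ / 2 = ‖a‖ - ‖a‖ / 2 := by ring
        _ ≤ ‖lam ^ n * a‖ - ‖((‖a‖ / 2 : ℝ) : 𝕜)‖ := by rw [hyn]; linarith
        _ ≤ ‖lam ^ n * a - ((‖a‖ / 2 : ℝ) : 𝕜)‖ := norm_sub_norm_le _ _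
  -- density gives an orbit point δ-close to lp.single 2 0 y, contradiction at coord 0
  set z : lp (fun _ : ℕ => 𝕜) 2 := lp.single 2 0 y with hz
  obtain ⟨w, hw1, n, hn⟩ := Metric.dense_iff.mp hx z δ hδ
  have hn' : (T ^ n) x = w := hn
  have hwz : ‖(T ^ n) x - z‖ < δ := by
    have h := Metric.mem_ball.mp hw1
    rw [dist_eq_norm, ← hn'] at h
    exact h
  have hcoord : ‖((T ^ n) x : ∀ _ : ℕ, 𝕜) 0 - (z : ∀ _ : ℕ, 𝕜) 0‖ ≤ ‖(T ^ n) x - z‖ := by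
    have := lp.norm_apply_le_norm (p := 2) (by norm_num) ((T ^ n) x - z) 0
    simpa [lp.coeFn_sub, Pi.sub_apply] using this
  have hz0 : (z : ∀ _ : ℕ, 𝕜) 0 = y := by rw [hz]; exact lp.single_apply_self (E := fun _ : ℕ => 𝕜) 2 0 y
  rw [key n, hz0] at hcoord
  exact absurd (lt_of_le_of_lt (le_trans (hy n) hcoord) hwz) (lt_irrefl δ)
end

section
/- Let X be a Banach space over 𝕜 (𝕜 = ℝ or ℂ) and let (e_n)_{n ≥ 0} be a sequence in X with ‖e_n‖ = 1 for all n, for which there exists a constant C > 0 such that for all natural numbers m ≤ n and all scalars a₀, …, a_{n}, one has ‖∑_{i ≤ m} a_i e_i‖ ≤ C ‖∑_{i ≤ n} a_i e_i‖ (i.e., (e_n) is a normalized basic sequence). Let λ ∈ 𝕜, let J ⊆ ℕ be an infinite set, and let K be a bounded linear operator on X such that K e_j = 2 e_{j+1} − λ e_j for every j ∈ J. Then K is not a compact operator; in fact, the family (K e_j)_{j ∈ J} has no convergent subsequence. -/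
open Filter Topology

/-- If `(e_n)` is a normalized basic sequence and `K e_j = 2 e_{j+1} - λ e_j` for all `j` in an
infinite set `J`, then `K` is not compact: the family `(K e_j)_{j ∈ J}` has no convergent
subsequence. -/
theorem not_compact_of_shift_like {𝕜 X : Type*} [RCLike 𝕜] [NormedAddCommGroup X]
    [NormedSpace 𝕜 X] (e : ℕ → X) (he : ∀ n, ‖e n‖ = 1)
    (hbasic : ∃ C > (0 : ℝ), ∀ m n : ℕ, m ≤ n → ∀ a : ℕ → 𝕜,
      ‖∑ i ∈ Finset.range (m + 1), a i • e i‖ ≤ C * ‖∑ i ∈ Finset.range (n + 1), a i • e i‖)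
    (lam : 𝕜) (J : Set ℕ) (hJ : J.Infinite) (K : X →L[𝕜] X)
    (hK : ∀ j ∈ J, K (e j) = (2 : 𝕜) • e (j + 1) - lam • e j) :
    ¬ IsCompactOperator ⇑K ∧
      ¬ ∃ (φ : ℕ → ℕ) (L : X), StrictMono φ ∧ (∀ k, φ k ∈ J) ∧
          Tendsto (fun k => K (e (φ k))) atTop (𝓝 L) := by
  obtain ⟨C, hC, hb⟩ := hbasic
  -- separation of K e_j's
  have sep : ∀ j ∈ J, ∀ j' ∈ J, j < j' → 2 / (1 + C) ≤ ‖K (e j') - K (e j)‖ := by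
    intro j hj j' hj' hjj
    set a : ℕ → 𝕜 := fun i =>
      (if i = j then lam else 0) + (if i = j + 1 then (-2 : 𝕜) else 0) +
      (if i = j' then -lam else 0) + (if i = j' + 1 then (2 : 𝕜) else 0) with ha
    have hsum : ∀ N : ℕ, ∑ i ∈ Finset.range N, a i • e i =
        (if j < N then lam • e j else 0) + (if j + 1 < N then (-2 : 𝕜) • e (j + 1) else 0) +
        (if j' < N then (-lam) • e j' else 0) +
        (if j' + 1 < N then (2 : 𝕜) • e (j' + 1) else 0) := by
      intro N
      simp only [ha, add_smul, Finset.sum_add_distrib, ite_smul, zero_smul,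
        Finset.sum_ite_eq', Finset.mem_range]
    have hn : ∑ i ∈ Finset.range (j' + 1 + 1), a i • e i = K (e j') - K (e j) := by
      rw [hsum, hK j hj, hK j' hj']
      have h1 : j < j' + 1 + 1 := by omega
      have h2 : j + 1 < j' + 1 + 1 := by omega
      have h3 : j' < j' + 1 + 1 := by omega
      have h4 : j' + 1 < j' + 1 + 1 := by omega
      rw [if_pos h1, if_pos h2, if_pos h3, if_pos h4]
      simp only [neg_smul]
      abel
    have hm : ∑ i ∈ Finset.range (j' + 1), a i • e i
        = (K (e j') - K (e j)) - (2 : 𝕜) • e (j' + 1) := by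
      have : a (j' + 1) = 2 := by
        simp only [ha]
        have h1 : ¬ (j' + 1 = j) := by omega
        have h2 : ¬ (j' + 1 = j + 1) := by omega
        have h3 : ¬ (j' + 1 = j') := by omega
        rw [if_neg h1, if_neg h2, if_neg h3]
        simp
      have h := Finset.sum_range_succ (fun i => a i • e i) (j' + 1)
      rw [hn, this] at h
      rw [h, add_sub_cancel_right]
    have hineq := hb j' (j' + 1) (Nat.le_succ _) a
    rw [hn, hm] at hineq
    have h2norm : ‖(2 : 𝕜) • e (j' + 1)‖ = 2 := by
      rw [norm_smul, he]
      simp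
    have key : (2 : ℝ) ≤ (1 + C) * ‖K (e j') - K (e j)‖ := by
      have tri := norm_sub_le (K (e j') - K (e j))
        ((K (e j') - K (e j)) - (2 : 𝕜) • e (j' + 1))
      rw [sub_sub_cancel] at tri
      rw [h2norm] at tri
      nlinarith [tri, hineq]
    rw [div_le_iff₀ (by linarith)]
    linarith [key]
  have hpos : 0 < 2 / (1 + C) := by positivity
  -- second conjunct
  have hno : ¬ ∃ (φ : ℕ → ℕ) (L : X), StrictMono φ ∧ (∀ k, φ k ∈ J) ∧
      Tendsto (fun k => K (e (φ k))) atTop (𝓝 L) := by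
    rintro ⟨φ, L, hφ, hφJ, hlim⟩
    have hcauchy : CauchySeq (fun k => K (e (φ k))) := hlim.cauchySeq
    rw [Metric.cauchySeq_iff] at hcauchy
    obtain ⟨N, hN⟩ := hcauchy (2 / (1 + C)) hpos
    have h1 := hN (N + 1) (Nat.le_succ N) N le_rfl
    rw [dist_eq_norm] at h1
    have h2 := sep (φ N) (hφJ N) (φ (N + 1)) (hφJ (N + 1)) (hφ (Nat.lt_succ_self N))
    linarith
  refine ⟨fun hc => hno ?_, hno⟩
  -- build a strictly monotone enumeration of J
  haveI : Infinite J := hJ.to_subtype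
  classical
  set φ0 : ℕ → ℕ := fun k => ((Nat.Subtype.orderIsoOfNat J k : J) : ℕ) with hφ0
  have hφ0mono : StrictMono φ0 := fun k l hkl => by
    have := (Nat.Subtype.orderIsoOfNat J).strictMono hkl
    exact_mod_cast this
  have hφ0J : ∀ k, φ0 k ∈ J := fun k => (Nat.Subtype.orderIsoOfNat J k).2
  -- image of the unit closed ball is contained in a compact set
  obtain ⟨S, hS, hsub⟩ :=
    IsCompactOperator.image_closedBall_subset_compact (f := (K : X →ₗ[𝕜] X)) hc 1
  have hmem : ∀ k, K (e (φ0 k)) ∈ S := by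
    intro k
    apply hsub
    refine ⟨e (φ0 k), ?_, rfl⟩
    simp [Metric.mem_closedBall, he]
  obtain ⟨L, _, ψ, hψ, hlim⟩ := hS.tendsto_subseq hmem
  exact ⟨φ0 ∘ ψ, L, hφ0mono.comp hψ, fun k => hφ0J _, hlim⟩
end

section
/- Let X be a Banach space over 𝕜 (𝕜 = ℝ or ℂ) with the scalar-plus-compact property, i.e., every bounded linear operator on X is of the form λ•I + K with λ ∈ 𝕜 and K a compact operator. Let (e_n)_{n ≥ 0} be a sequence in X with ‖e_n‖ = 1 for all n, for which there exists a constant C > 0 such that for all natural numbers m ≤ n and all scalars a₀, …, a_{n}, one has ‖∑_{i ≤ m} a_i e_i‖ ≤ C ‖∑_{i ≤ n} a_i e_i‖ (i.e., (e_n) is a normalized basic sequence), and let J ⊆ ℕ be an infinite set. Then there is no bounded linear operator T on X satisfying T e_j = 2 e_{j+1} for every j ∈ J. -/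
open Filter Topology

/-- On a Banach space with the scalar-plus-compact property, no bounded operator `T` can act as
`T e_j = 2 e_{j+1}` along an infinite set `J` of indices of a normalized basic sequence. -/
theorem no_doubling_shift_on_scalar_plus_compact {𝕜 X : Type*} [RCLike 𝕜]
    [NormedAddCommGroup X] [NormedSpace 𝕜 X]
    (hX : ∀ A : X →L[𝕜] X, ∃ (lam : 𝕜) (K : X →L[𝕜] X),
      IsCompactOperator ⇑K ∧ A = lam • ContinuousLinearMap.id 𝕜 X + K)
    (e : ℕ → X) (he : ∀ n, ‖e n‖ = 1)
    (hbasic : ∃ C > (0 : ℝ), ∀ m n : ℕ, m ≤ n → ∀ a : ℕ → 𝕜,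
      ‖∑ i ∈ Finset.range (m + 1), a i • e i‖ ≤ C * ‖∑ i ∈ Finset.range (n + 1), a i • e i‖)
    (J : Set ℕ) (hJ : J.Infinite) :
    ¬ ∃ T : X →L[𝕜] X, ∀ j ∈ J, T (e j) = (2 : 𝕜) • e (j + 1) := by
  rintro ⟨T, hT⟩
  obtain ⟨C, hC, hb⟩ := hbasic
  obtain ⟨lam, K, hKc, hTK⟩ := hX T
  -- action of K on the basis vectors indexed by J
  have hKe : ∀ j ∈ J, K (e j) = (2:𝕜) • e (j+1) - lam • e j := by
    intro j hj
    have h1 := hT j hj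
    rw [hTK] at h1
    simp only [ContinuousLinearMap.add_apply, ContinuousLinearMap.smul_apply,
      ContinuousLinearMap.id_apply] at h1
    rw [eq_sub_iff_add_eq, add_comm, h1]
  -- build a strictly increasing sequence in J with gaps ≥ 2
  choose f hfJ hfgt using hJ.exists_gt
  set j : ℕ → ℕ := fun n => Nat.rec (f 0) (fun _ prev => f (prev + 1)) n with hjdef
  have hjs : ∀ n, j (n+1) = f (j n + 1) := fun n => rfl
  have hjJ : ∀ n, j n ∈ J := by
    intro n; cases n with
    | zero => exact hfJ 0
    | succ n => rw [hjs]; exact hfJ _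
  have hgap : ∀ n, j n + 1 < j (n+1) := by
    intro n; rw [hjs]; exact hfgt _
  have hjmono : StrictMono j := strictMono_nat_of_lt_succ fun n => by
    have := hgap n; omega
  have hgap' : ∀ p q, p < q → j p + 2 ≤ j q := by
    intro p q hpq
    have h1 := hgap p
    have h2 : j (p+1) ≤ j q := hjmono.monotone hpq
    omega
  set v : ℕ → X := fun n => K (e (j n)) with hv
  have hvformula : ∀ n, v n = (2:𝕜) • e (j n + 1) - lam • e (j n) := fun n =>
    hKe (j n) (hjJ n)
  -- lower bound ‖v n‖ ≥ 2 / (1 + C)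
  have hlow : ∀ n, 2 / (1 + C) ≤ ‖v n‖ := by
    intro n
    set a : ℕ → 𝕜 := fun i => if i = j n then -lam else if i = j n + 1 then 2 else 0 with ha
    have e1 : a (j n) = -lam := by simp [ha]
    have e2 : a (j n + 1) = 2 := by simp [ha, (by omega : ¬ j n + 1 = j n)]
    have hz : ∀ i ∈ Finset.range (j n), a i • e i = 0 := by
      intro i hi
      have hi' := Finset.mem_range.mp hi
      simp only [ha]
      rw [if_neg (by omega), if_neg (by omega), zero_smul]
    have hsum2 : ∑ i ∈ Finset.range (j n + 1 + 1), a i • e i = v n := by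
      rw [hvformula, Finset.sum_range_succ, Finset.sum_range_succ,
        Finset.sum_eq_zero hz, e1, e2]
      module
    have hsum1 : ∑ i ∈ Finset.range (j n + 1), a i • e i = -(lam • e (j n)) := by
      rw [Finset.sum_range_succ, Finset.sum_eq_zero hz, e1]
      module
    have hineq := hb (j n) (j n + 1) (by omega) a
    rw [hsum1, hsum2] at hineq
    have hlam : ‖lam‖ ≤ C * ‖v n‖ := by
      calc ‖lam‖ = ‖-(lam • e (j n))‖ := by
            rw [norm_neg, norm_smul, he, mul_one]
        _ ≤ C * ‖v n‖ := hineq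
    have h2 : (2:ℝ) ≤ ‖v n‖ + ‖lam‖ := by
      have h20 : ‖(2:𝕜) • e (j n + 1)‖ = 2 := by
        rw [norm_smul, he, mul_one]; simp
      calc (2:ℝ) = ‖(2:𝕜) • e (j n + 1)‖ := h20.symm
        _ = ‖v n + lam • e (j n)‖ := by rw [hvformula]; congr 1; abel
        _ ≤ ‖v n‖ + ‖lam • e (j n)‖ := norm_add_le _ _
        _ = ‖v n‖ + ‖lam‖ := by rw [norm_smul, he, mul_one]
    rw [div_le_iff₀ (by linarith)]
    nlinarith
  -- separation: ‖v p - v q‖ ≥ (2/(1+C))/C for p < q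
  have hsep : ∀ p q, p < q → 2 / (1 + C) / C ≤ ‖v p - v q‖ := by
    intro p q hpq
    have hg := hgap' p q hpq
    set a : ℕ → 𝕜 := fun i =>
      if i = j p then -lam else if i = j p + 1 then 2 else
      if i = j q then lam else if i = j q + 1 then -2 else 0 with ha
    have e1 : a (j p) = -lam := by simp [ha]
    have e2 : a (j p + 1) = 2 := by simp [ha, (by omega : ¬ j p + 1 = j p)]
    have e3 : a (j q) = lam := by
      simp only [ha]; split_ifs <;> first | rfl | omega
    have e4 : a (j q + 1) = -2 := by
      simp only [ha]; split_ifs <;> first | rfl | omega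
    have hzsmall : ∀ i, i ≠ j p → i ≠ j p + 1 → i ≠ j q → i ≠ j q + 1 → a i • e i = 0 := by
      intro i h1 h2 h3 h4
      simp only [ha]
      rw [if_neg h1, if_neg h2, if_neg h3, if_neg h4, zero_smul]
    have hsum1 : ∑ i ∈ Finset.range (j p + 1 + 1), a i • e i = v p := by
      rw [hvformula, Finset.sum_range_succ, Finset.sum_range_succ,
        Finset.sum_eq_zero (fun i hi => by
          have hi' := Finset.mem_range.mp hi
          exact hzsmall i (by omega) (by omega) (by omega) (by omega)), e1, e2]
      module
    have hsum2 : ∑ i ∈ Finset.range (j q + 1 + 1), a i • e i = v p - v q := by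
      rw [hvformula, hvformula, Finset.sum_range_succ, Finset.sum_range_succ]
      have hmid : ∑ i ∈ Finset.range (j q), a i • e i
          = ∑ i ∈ ({j p, j p + 1} : Finset ℕ), a i • e i := by
        apply (Finset.sum_subset ?_ ?_).symm
        · intro x hx
          simp only [Finset.mem_insert, Finset.mem_singleton] at hx
          rcases hx with rfl | rfl <;> exact Finset.mem_range.mpr (by omega)
        · intro x hx hnx
          simp only [Finset.mem_insert, Finset.mem_singleton, not_or] at hnx
          have hx' := Finset.mem_range.mp hx
          exact hzsmall x hnx.1 hnx.2 (by omega) (by omega)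
      rw [hmid, Finset.sum_pair (by omega : j p ≠ j p + 1), e1, e2, e3, e4]
      module
    have hineq := hb (j p + 1) (j q + 1) (by omega) a
    rw [hsum1, hsum2] at hineq
    have hl := hlow p
    rw [div_le_iff₀ hC]
    linarith
  -- compactness: v has a convergent subsequence, contradicting separation
  have hball : ∀ n, e (j n) ∈ Metric.closedBall (0:X) 1 := by
    intro n
    simp [Metric.mem_closedBall, dist_zero_right, he]
  obtain ⟨S, hScomp, hSsub⟩ :=
    (hKc.image_closedBall_subset_compact (σ₁₂ := RingHom.id 𝕜) (f := (K : X →ₗ[𝕜] X)) 1 :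
      ∃ S : Set X, IsCompact S ∧ (K : X →ₗ[𝕜] X) '' Metric.closedBall 0 1 ⊆ S)
  have hvS : ∀ n, v n ∈ S := fun n => hSsub ⟨e (j n), hball n, rfl⟩
  obtain ⟨x, -, φ, hφmono, hφtendsto⟩ := hScomp.tendsto_subseq hvS
  have hcauchy : CauchySeq (v ∘ φ) := hφtendsto.cauchySeq
  rw [Metric.cauchySeq_iff] at hcauchy
  have hε : 0 < 2 / (1 + C) / C := by positivity
  obtain ⟨N, hN⟩ := hcauchy _ hε
  have hd := hN (N+1) (by omega) N (le_refl N)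
  rw [dist_eq_norm] at hd
  have := hsep (φ N) (φ (N+1)) (hφmono (by omega))
  have hnorm : ‖v (φ N) - v (φ (N+1))‖ = ‖v (φ (N+1)) - v (φ N)‖ := by
    rw [← norm_neg]; congr 1; abel
  rw [hnorm] at this
  simp only [Function.comp] at hd
  linarith
end

section
/- Let X be a Banach space over 𝕜 (𝕜 = ℝ or ℂ) with the scalar-plus-compact property, i.e., every bounded linear operator on X is of the form λ•I + K with λ ∈ 𝕜 and K a compact operator. Let (e_n)_{n ≥ 0} be a sequence in X with ‖e_n‖ = 1 for all n, for which there exists a constant C > 0 such that for all natural numbers m ≤ n and all scalars a₀, …, a_{n}, one has ‖∑_{i ≤ m} a_i e_i‖ ≤ C ‖∑_{i ≤ n} a_i e_i‖ (i.e., (e_n) is a normalized basic sequence), and let J ⊆ ℕ be an infinite set. Define w(i) = 4(1 − 1/(2√i)) for integers i ≥ 1. Then there is no bounded linear operator T on X satisfying T e_j = w(j+1) • e_{j+1} for every j ∈ J. -/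
open Filter Topology

/-- The weight `w i = 4(1 - 1/(2√i))` is at least `2` for `i ≥ 1`. -/
lemma weight_ge_two (w : ℕ → ℝ) (hw : ∀ i : ℕ, 1 ≤ i → w i = 4 * (1 - 1 / (2 * Real.sqrt i)))
    {i : ℕ} (hi : 1 ≤ i) : 2 ≤ w i := by
  have h1 : (1 : ℝ) ≤ Real.sqrt i := by
    rw [show (1:ℝ) = Real.sqrt 1 by simp]
    exact Real.sqrt_le_sqrt (by exact_mod_cast hi)
  have hpos : (0:ℝ) < 2 * Real.sqrt i := by linarith
  have h2 : 1 / (2 * Real.sqrt i) ≤ 1 / 2 := by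
    rw [div_le_div_iff₀ hpos (by norm_num)]
    linarith
  rw [hw i hi]
  linarith

/-- On a Banach space with the scalar-plus-compact property, no bounded operator `T` can act as
`T e_j = w(j+1) e_{j+1}`, where `w(i) = 4(1 - 1/(2√i))`, along an infinite set `J` of indices of
a normalized basic sequence. -/
theorem no_weighted_shift_on_scalar_plus_compact {𝕜 X : Type*} [RCLike 𝕜]
    [NormedAddCommGroup X] [NormedSpace 𝕜 X]
    (hX : ∀ A : X →L[𝕜] X, ∃ (lam : 𝕜) (K : X →L[𝕜] X),
      IsCompactOperator ⇑K ∧ A = lam • ContinuousLinearMap.id 𝕜 X + K)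
    (e : ℕ → X) (he : ∀ n, ‖e n‖ = 1)
    (hbasic : ∃ C > (0 : ℝ), ∀ m n : ℕ, m ≤ n → ∀ a : ℕ → 𝕜,
      ‖∑ i ∈ Finset.range (m + 1), a i • e i‖ ≤ C * ‖∑ i ∈ Finset.range (n + 1), a i • e i‖)
    (J : Set ℕ) (hJ : J.Infinite)
    (w : ℕ → ℝ) (hw : ∀ i : ℕ, 1 ≤ i → w i = 4 * (1 - 1 / (2 * Real.sqrt i))) :
    ¬ ∃ T : X →L[𝕜] X, ∀ j ∈ J, T (e j) = ((w (j + 1) : ℝ) : 𝕜) • e (j + 1) := by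
  rintro ⟨T, hT⟩
  obtain ⟨C, hC, hB⟩ := hbasic
  obtain ⟨lam, K, hKcomp, hA⟩ := hX T
  -- `K (e j) = T (e j) - lam • e j`
  have hK : ∀ j, K (e j) = T (e j) - lam • e j := by
    intro j
    rw [hA]; simp
  set ε : ℝ := 1 / (1 + C) with hε
  have hεpos : 0 < ε := by positivity
  -- the compact set containing all `K (e j)`
  set S : Set X := closure ((⇑K) '' Metric.closedBall 0 1) with hS
  have hScomp : IsCompact S :=
    hKcomp.isCompact_closure_image_of_bounded (f := (K : X →ₗ[𝕜] X))
      Metric.isBounded_closedBall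
  -- the filter of large elements of J
  have hFreq : ∃ᶠ n in atTop, n ∈ J := Nat.frequently_atTop_iff_infinite.mpr hJ
  have hne : (atTop ⊓ 𝓟 J).NeBot := by
    rwa [Filter.frequently_iff_neBot] at hFreq
  have hmem : ∀ j, K (e j) ∈ S := by
    intro j
    exact subset_closure ⟨e j, by simp [Metric.mem_closedBall, he j], rfl⟩
  have hle : Filter.map (fun j => K (e j)) (atTop ⊓ 𝓟 J) ≤ 𝓟 S :=
    Filter.tendsto_principal.mpr (Filter.Eventually.of_forall fun j => hmem j)
  obtain ⟨x, -, hx⟩ := hScomp.exists_mapClusterPt (f := atTop ⊓ 𝓟 J)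
    (u := fun j => K (e j)) hle
  -- frequently, `K (e j)` lies in the ball of radius `ε/2` around `x`
  have hfr : ∃ᶠ j in atTop ⊓ 𝓟 J, K (e j) ∈ Metric.ball x (ε / 2) :=
    (mapClusterPt_iff_frequently.mp hx) _ (Metric.ball_mem_nhds x (by linarith))
  -- pick `j ∈ J` with `K (e j)` close to `x`
  have hpick : ∀ N : ℕ, ∃ j, N ≤ j ∧ j ∈ J ∧ dist (K (e j)) x < ε / 2 := by
    intro N
    have hsmem : (Set.Ici N ∩ J) ∈ atTop ⊓ 𝓟 J :=
      Filter.inter_mem_inf (Filter.mem_atTop N) (Filter.mem_principal_self J)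
    obtain ⟨j, hj1, hj2⟩ := Filter.frequently_iff.mp hfr hsmem
    exact ⟨j, hj1.1, hj1.2, by simpa [Metric.mem_ball] using hj2⟩
  obtain ⟨j, -, hjJ, hjx⟩ := hpick 0
  obtain ⟨j', hj'g, hj'J, hj'x⟩ := hpick (j + 2)
  -- the vector `v = K (e j) - K (e j')` is small
  have hvsmall : ‖K (e j) - K (e j')‖ < ε := by
    have := dist_triangle (K (e j)) x (K (e j'))
    rw [dist_comm x (K (e j'))] at this
    calc ‖K (e j) - K (e j')‖ = dist (K (e j)) (K (e j')) := (dist_eq_norm _ _).symm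
      _ ≤ dist (K (e j)) x + dist (K (e j')) x := this
      _ < ε / 2 + ε / 2 := by linarith
      _ = ε := by ring
  -- express `v` as a linear combination of the basic sequence
  set a : ℕ → 𝕜 := fun i =>
    (if i = j then -lam else 0) + (if i = j + 1 then ((w (j+1) : ℝ) : 𝕜) else 0) +
    (if i = j' then lam else 0) + (if i = j' + 1 then -((w (j'+1) : ℝ) : 𝕜) else 0) with ha
  have h1 : j ∈ Finset.range (j' + 1 + 1) := Finset.mem_range.mpr (by omega)
  have h2 : j + 1 ∈ Finset.range (j' + 1 + 1) := Finset.mem_range.mpr (by omega)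
  have h3 : j' ∈ Finset.range (j' + 1 + 1) := Finset.mem_range.mpr (by omega)
  have h4 : j' + 1 ∈ Finset.range (j' + 1 + 1) := Finset.mem_range.mpr (by omega)
  have hsum : ∑ i ∈ Finset.range (j' + 1 + 1), a i • e i = K (e j) - K (e j') := by
    have : ∑ i ∈ Finset.range (j' + 1 + 1), a i • e i =
        (-lam) • e j + ((w (j+1) : ℝ) : 𝕜) • e (j+1) + lam • e j' +
        (-((w (j'+1) : ℝ) : 𝕜)) • e (j'+1) := by
      simp only [ha, add_smul, ite_smul, zero_smul, Finset.sum_add_distrib,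
        Finset.sum_ite_eq', h1, h2, h3, h4, if_pos]
    rw [this, hK j, hK j', hT j hjJ, hT j' hj'J]
    module
  -- the coefficient of `e (j'+1)` in `v`
  have hlast : a (j' + 1) = -((w (j'+1) : ℝ) : 𝕜) := by
    simp only [ha]
    rw [if_neg (by omega), if_neg (by omega), if_neg (by omega)]
    simp
  -- split off the last term
  have hsplit : ∑ i ∈ Finset.range (j' + 1 + 1), a i • e i =
      (∑ i ∈ Finset.range (j' + 1), a i • e i) + a (j' + 1) • e (j' + 1) :=
    Finset.sum_range_succ _ _
  have hP : ‖∑ i ∈ Finset.range (j' + 1), a i • e i‖ ≤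
      C * ‖∑ i ∈ Finset.range (j' + 1 + 1), a i • e i‖ := hB j' (j' + 1) (by omega) a
  have hwpos : (2 : ℝ) ≤ w (j' + 1) := weight_ge_two w hw (by omega)
  have hnorm : ‖a (j' + 1) • e (j' + 1)‖ = w (j' + 1) := by
    rw [hlast, norm_smul, he, mul_one, norm_neg]
    rw [show ‖((w (j'+1) : ℝ) : 𝕜)‖ = |w (j'+1)| by
      rw [RCLike.norm_ofReal]]
    exact abs_of_nonneg (by linarith)
  -- put it together
  have hfull : ‖∑ i ∈ Finset.range (j' + 1 + 1), a i • e i‖ < ε := by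
    rwa [hsum]
  have : w (j' + 1) ≤ (1 + C) * ‖∑ i ∈ Finset.range (j' + 1 + 1), a i • e i‖ := by
    have h5 : a (j' + 1) • e (j' + 1) =
        (∑ i ∈ Finset.range (j' + 1 + 1), a i • e i) -
        (∑ i ∈ Finset.range (j' + 1), a i • e i) := by
      rw [hsplit]; abel
    calc w (j' + 1) = ‖a (j' + 1) • e (j' + 1)‖ := hnorm.symm
      _ ≤ ‖∑ i ∈ Finset.range (j' + 1 + 1), a i • e i‖ +
          ‖∑ i ∈ Finset.range (j' + 1), a i • e i‖ := by
            rw [h5]; exact norm_sub_le _ _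
      _ ≤ (1 + C) * ‖∑ i ∈ Finset.range (j' + 1 + 1), a i • e i‖ := by
        nlinarith [hP]
  have hεC : (1 + C) * ε = 1 := by
    rw [hε]; field_simp
  nlinarith [this, hfull, mul_lt_mul_of_pos_left hfull (show (0:ℝ) < 1 + C by linarith)]
end
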